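/- arXiv:2004.09711 — 4 statements merged into one kernel-verified Lean document; each statement's English description precedes it below -/
import Mathlib

section
/- Suppose I ⊆ {1, …, r} decomposes as a disjoint union I = I_1 ⊔ I_2 with ⟨α_a, α_b^∨⟩ = 0 for all a ∈ I_1 and b ∈ I_2, and suppose i ∈ I_1. Then v_{I,I^c}(ϖ_i) = v_{I_1,I_1^c}(ϖ_i), where for a subset S, S^c denotes its complement in {1, …, r}. -/
open Finset

section aux
variable {V : Type*} [AddCommGroup V] [Module ℚ V] {r : ℕ}

/-- Key nondegeneracy lemma: a vector supported on `I` killed by all coroots in `I`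
is zero, for a finite root system. -/
lemma key_aux (b : Module.Basis (Fin r) ℚ V) (coroot : Fin r → Module.Dual ℚ V)
    (hdiag : ∀ i, coroot i (b i) = 2)
    (Φ : Set V) (hΦfin : Φ.Finite) (hΦroot : ∀ i, b i ∈ Φ)
    (hΦrefl : ∀ β ∈ Φ, ∀ i, β - coroot i β • b i ∈ Φ)
    (I : Finset (Fin r)) (w : V)
    (hker : ∀ k ∈ I, coroot k w = 0)
    (hsupp : ∀ j, j ∉ I → b.repr w j = 0) : w = 0 := by
  classical
  -- the reflections
  set f : Fin r → (V →ₗ[ℚ] V) := fun i => LinearMap.id - (coroot i).smulRight (b i) with hf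
  have hfapp : ∀ i (y : V), f i y = y - coroot i y • b i := fun i y => rfl
  have hinvol : ∀ i (y : V), f i (f i y) = y := by
    intro i y
    rw [hfapp, hfapp, map_sub, map_smul, hdiag i, smul_eq_mul]
    module
  set σ : Fin r → (V ≃ₗ[ℚ] V) := fun i =>
    LinearEquiv.ofLinear (f i) (f i)
      (LinearMap.ext fun y => hinvol i y) (LinearMap.ext fun y => hinvol i y) with hσ
  have hσapp : ∀ i (y : V), σ i y = y - coroot i y • b i := fun i y => rfl
  have hσmul : ∀ i, σ i * σ i = 1 := by
    intro i
    ext y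
    exact hinvol i y
  have hσinv : ∀ i, (σ i)⁻¹ = σ i := fun i => inv_eq_of_mul_eq_one_right (hσmul i)
  set W : Subgroup (V ≃ₗ[ℚ] V) := Subgroup.closure (Set.range σ) with hW
  -- every element of W preserves Φ
  have hpres : ∀ g ∈ W, (∀ β ∈ Φ, g β ∈ Φ) ∧ (∀ β ∈ Φ, g⁻¹ β ∈ Φ) := by
    intro g hg
    refine Subgroup.closure_induction ?_ ?_ ?_ ?_ hg
    · rintro g ⟨i, rfl⟩
      rw [hσinv i]
      exact ⟨fun β hβ => hΦrefl β hβ i, fun β hβ => hΦrefl β hβ i⟩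
    · simp
    · rintro g h _ _ ⟨hg1, hg2⟩ ⟨hh1, hh2⟩
      refine ⟨fun β hβ => ?_, fun β hβ => ?_⟩
      · simpa using hg1 _ (hh1 β hβ)
      · rw [mul_inv_rev]
        simpa using hh2 _ (hg2 β hβ)
    · rintro g _ ⟨hg1, hg2⟩
      exact ⟨hg2, by simpa using hg1⟩
  -- W is finite
  haveI : Finite ↥Φ := hΦfin.to_subtype
  have hWfin : Finite W := by
    have hinj : Function.Injective
        (fun (g : W) => (fun p : Φ => (⟨g.1 p.1, (hpres g.1 g.2).1 p.1 p.2⟩ : Φ))) := by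
      intro g g' h
      apply Subtype.ext
      apply LinearEquiv.toLinearMap_injective
      apply b.ext
      intro k
      have := congrFun h ⟨b k, hΦroot k⟩
      simpa [Subtype.ext_iff] using this
    exact Finite.of_injective _ hinj
  haveI : Fintype W := Fintype.ofFinite W
  -- the invariant form
  set B₀ : V →ₗ[ℚ] V →ₗ[ℚ] ℚ := ∑ k : Fin r, (b.coord k).smulRight (b.coord k) with hB₀
  have hB₀app : ∀ y z : V, B₀ y z = ∑ k : Fin r, b.repr y k * b.repr z k := by
    intro y z
    simp [hB₀, LinearMap.sum_apply, Module.Basis.coord_apply, smul_eq_mul]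
  set B : V →ₗ[ℚ] V →ₗ[ℚ] ℚ :=
    ∑ g : W, LinearMap.compl₁₂ B₀ (g.1 : V ≃ₗ[ℚ] V).toLinearMap (g.1 : V ≃ₗ[ℚ] V).toLinearMap
    with hB
  have hBapp : ∀ y z : V, B y z = ∑ g : W, B₀ (g.1 y) (g.1 z) := by
    intro y z
    simp [hB, LinearMap.sum_apply, LinearMap.compl₁₂_apply]
  -- invariance
  have hWmem : ∀ i, σ i ∈ W := fun i => Subgroup.subset_closure ⟨i, rfl⟩
  have hBinv : ∀ (i : Fin r) (y z : V), B (σ i y) (σ i z) = B y z := by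
    intro i y z
    rw [hBapp, hBapp]
    set c : W := ⟨σ i, hWmem i⟩ with hc
    have := Equiv.sum_comp (Equiv.mulRight c) (fun g : W => B₀ (g.1 y) (g.1 z))
    rw [← this]
    apply Finset.sum_congr rfl
    intro g _
    simp only [Equiv.coe_mulRight]
    congr 1
  -- B(b l, w) = 0 for l in I
  have hBl : ∀ l ∈ I, B (b l) w = 0 := by
    intro l hl
    have h1 := hBinv l (b l) w
    have h2 : σ l (b l) = -(b l) := by
      rw [hσapp, hdiag l]
      module
    have h3 : σ l w = w := by
      rw [hσapp, hker l hl]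
      simp
    rw [h2, h3, map_neg, LinearMap.neg_apply] at h1
    linarith
  -- w is supported on I
  have hw : w = ∑ k ∈ I, b.repr w k • b k := by
    have h1 := b.sum_repr w
    have h2 : ∑ k ∈ I, b.repr w k • b k = ∑ k : Fin r, b.repr w k • b k := by
      apply Finset.sum_subset (Finset.subset_univ I)
      intro k _ hk
      rw [hsupp k hk, zero_smul]
    rw [h2, h1]
  -- B w w = 0
  have hBww : B w w = 0 := by
    nth_rewrite 1 [hw]
    rw [map_sum, LinearMap.sum_apply]
    apply Finset.sum_eq_zero
    intro k hk
    rw [map_smul, LinearMap.smul_apply, hBl k hk, smul_zero]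
  -- positivity
  by_contra hne
  have hpos : 0 < B₀ w w := by
    rw [hB₀app]
    have hex : ∃ k, b.repr w k ≠ 0 := by
      by_contra hc
      push_neg at hc
      apply hne
      rw [hw]
      apply Finset.sum_eq_zero
      intro k _
      rw [hc k, zero_smul]
    obtain ⟨k, hk⟩ := hex
    apply Finset.sum_pos' (fun j _ => mul_self_nonneg _)
    exact ⟨k, Finset.mem_univ k, mul_self_pos.mpr hk⟩
  have hge : B₀ w w ≤ B w w := by
    rw [hBapp]
    have h1 : B₀ ((1 : W).1 w) ((1 : W).1 w) = B₀ w w := by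
      congr 1
    rw [← h1]
    apply Finset.single_le_sum (f := fun g : W => B₀ (g.1 w) (g.1 w))
      (fun g _ => by
        show (0:ℚ) ≤ B₀ (g.1 w) (g.1 w)
        rw [hB₀app]; exact Finset.sum_nonneg fun j _ => mul_self_nonneg _)
      (Finset.mem_univ (1 : W))
  rw [hBww] at hge
  linarith

lemma supp_sum (b : Module.Basis (Fin r) ℚ V) (y : V) (S : Finset (Fin r))
    (h : ∀ j ∉ S, b.repr y j = 0) : y = ∑ l ∈ S, b.repr y l • b l := by
  have h2 : ∑ l ∈ S, b.repr y l • b l = ∑ l : Fin r, b.repr y l • b l := by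
    apply Finset.sum_subset (Finset.subset_univ S)
    intro k _ hk
    rw [h k hk, zero_smul]
  rw [h2, b.sum_repr y]

end aux


/-- Suppose `I ⊆ {1, …, r}` decomposes as a disjoint union
`I = I₁ ⊔ I₂` with `⟨α_a, α_c^∨⟩ = 0` for all `a ∈ I₁` and `c ∈ I₂`, and suppose
`i ∈ I₁`.  Then `v_{I,Iᶜ}(ϖ_i) = v_{I₁,I₁ᶜ}(ϖ_i)`: if `v` solves the defining system for
`(I, Iᶜ)` and `v₁` solves the system for `(I₁, I₁ᶜ)` (both with weight `ϖ_i`), then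
`v = v₁`. -/
theorem stmt_12 {V : Type*} [AddCommGroup V] [Module ℚ V] {r : ℕ}
    (b : Module.Basis (Fin r) ℚ V) (coroot : Fin r → Module.Dual ℚ V)
    (hdiag : ∀ i, coroot i (b i) = 2)
    (hoff : ∀ i j : Fin r, i ≠ j → coroot j (b i) ≤ 0)
    (hint : ∀ i j : Fin r, ∃ n : ℤ, coroot j (b i) = (n : ℚ))
    (Φ : Set V) (hΦfin : Φ.Finite) (hΦroot : ∀ i, b i ∈ Φ)
    (hΦrefl : ∀ β ∈ Φ, ∀ i, β - coroot i β • b i ∈ Φ)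
    (x : Fin r → Module.Dual ℚ V)
    (hx : ∀ i j : Fin r, x j (b i) = if i = j then 1 else 0)
    (ϖ : Fin r → V)
    (hϖ : ∀ i j : Fin r, coroot j (ϖ i) = if i = j then 1 else 0)
    (i : Fin r) (I I₁ I₂ : Finset (Fin r))
    (hI : I = I₁ ∪ I₂) (hdisj : Disjoint I₁ I₂)
    (horth : ∀ a ∈ I₁, ∀ c ∈ I₂, coroot c (b a) = 0)
    (hi : i ∈ I₁)
    (v : V) (hvI : ∀ k ∈ I, coroot k v = 0)
    (hvJ : ∀ j ∈ Iᶜ, x j (ϖ i - v) = 0)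
    (v₁ : V) (hv₁I : ∀ k ∈ I₁, coroot k v₁ = 0)
    (hv₁J : ∀ j ∈ I₁ᶜ, x j (ϖ i - v₁) = 0) :
    v = v₁ := by
  classical
  -- x j is the j-th coordinate functional
  have hxr : ∀ (j : Fin r) (y : V), x j y = b.repr y j := by
    intro j
    have : x j = b.coord j := by
      apply b.ext
      intro k
      rw [hx k j, Module.Basis.coord_apply, b.repr_self, Finsupp.single_apply]
    intro y
    rw [this, Module.Basis.coord_apply]
  have hI₁sub : I₁ ⊆ I := hI ▸ Finset.subset_union_left
  -- repr supports
  have hrv : ∀ j ∉ I, b.repr (ϖ i - v) j = 0 := by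
    intro j hj
    rw [← hxr]
    exact hvJ j (Finset.mem_compl.mpr hj)
  have hrv₁ : ∀ j ∉ I₁, b.repr (ϖ i - v₁) j = 0 := by
    intro j hj
    rw [← hxr]
    exact hv₁J j (Finset.mem_compl.mpr hj)
  -- coroot c v₁ = 0 for c ∈ I₂
  have hv₁I₂ : ∀ c ∈ I₂, coroot c v₁ = 0 := by
    intro c hc
    have hic : i ≠ c := fun h => (Finset.disjoint_left.mp hdisj hi) (h ▸ hc)
    have husum := supp_sum b (ϖ i - v₁) I₁ hrv₁
    have h1 : coroot c (ϖ i - v₁) = 0 := by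
      rw [husum, map_sum]
      apply Finset.sum_eq_zero
      intro l hl
      rw [map_smul, horth l hl c hc, smul_zero]
    have h2 : coroot c (ϖ i) = 0 := by
      rw [hϖ i c, if_neg hic]
    rw [map_sub, h2] at h1
    linarith
  -- apply the key lemma to w = v - v₁
  have hw : v - v₁ = 0 := by
    apply key_aux b coroot hdiag Φ hΦfin hΦroot hΦrefl I
    · intro k hk
      rw [map_sub]
      rw [hI] at hk
      rcases Finset.mem_union.mp hk with h | h
      · rw [hvI k (hI ▸ hk), hv₁I k h, sub_zero]
      · rw [hvI k (hI ▸ hk), hv₁I₂ k h, sub_zero]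
    · intro j hj
      have : v - v₁ = (ϖ i - v₁) - (ϖ i - v) := by abel
      rw [this, map_sub, Finsupp.sub_apply, hrv j hj,
        hrv₁ j (fun h => hj (hI₁sub h)), sub_zero]
  exact sub_eq_zero.mp hw
end

section
/- Let I_1 and I_2 be distinct connected subsets of {1, …, r}, each containing the index i. Then v_{I_1,I_1^c}(ϖ_i) ≠ v_{I_2,I_2^c}(ϖ_i). -/
set_option maxHeartbeats 1000000


/-- Let `I₁` and `I₂` be distinct connected subsets of `{1, …, r}` (for
the Dynkin graph), each containing the index `i`.  Then
`v_{I₁,I₁ᶜ}(ϖ_i) ≠ v_{I₂,I₂ᶜ}(ϖ_i)`. -/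
theorem stmt_14 {V : Type*} [AddCommGroup V] [Module ℚ V] {r : ℕ}
    (b : Module.Basis (Fin r) ℚ V) (coroot : Fin r → Module.Dual ℚ V)
    (hdiag : ∀ i, coroot i (b i) = 2)
    (hoff : ∀ i j : Fin r, i ≠ j → coroot j (b i) ≤ 0)
    (hint : ∀ i j : Fin r, ∃ n : ℤ, coroot j (b i) = (n : ℚ))
    (Φ : Set V) (hΦfin : Φ.Finite) (hΦroot : ∀ i, b i ∈ Φ)
    (hΦrefl : ∀ β ∈ Φ, ∀ i, β - coroot i β • b i ∈ Φ)
    (x : Fin r → Module.Dual ℚ V)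
    (hx : ∀ i j : Fin r, x j (b i) = if i = j then 1 else 0)
    (ϖ : Fin r → V)
    (hϖ : ∀ i j : Fin r, coroot j (ϖ i) = if i = j then 1 else 0)
    (i : Fin r) (I₁ I₂ : Finset (Fin r)) (hne : I₁ ≠ I₂)
    (hi₁ : i ∈ I₁) (hi₂ : i ∈ I₂)
    (hconn₁ : ((SimpleGraph.fromRel fun a c : Fin r => coroot c (b a) ≠ 0).induce
      (↑I₁ : Set (Fin r))).Connected)
    (hconn₂ : ((SimpleGraph.fromRel fun a c : Fin r => coroot c (b a) ≠ 0).induce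
      (↑I₂ : Set (Fin r))).Connected)
    (v₁ : V) (hv₁I : ∀ k ∈ I₁, coroot k v₁ = 0)
    (hv₁J : ∀ j ∈ I₁ᶜ, x j (ϖ i - v₁) = 0)
    (v₂ : V) (hv₂I : ∀ k ∈ I₂, coroot k v₂ = 0)
    (hv₂J : ∀ j ∈ I₂ᶜ, x j (ϖ i - v₂) = 0) :
    v₁ ≠ v₂ := by
  classical
  intro heq
  -- x is the dual basis of b
  have hxcoord : ∀ (j : Fin r) (v : V), x j v = b.repr v j := by
    intro j v
    have : x j = b.coord j := by
      apply b.ext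
      intro k
      simp [hx, Module.Basis.coord_apply, Module.Basis.repr_self, Finsupp.single_apply, eq_comm]
    rw [this, Module.Basis.coord_apply]
  -- simple reflections
  set σ : Fin r → (V →ₗ[ℚ] V) := fun k => LinearMap.id - (coroot k).smulRight (b k) with hσ
  have hσapp : ∀ k v, σ k v = v - coroot k v • b k := by
    intro k v; simp [hσ]
  have hσinv : ∀ k, Function.Involutive (σ k) := by
    intro k v
    rw [hσapp, hσapp, map_sub, map_smul, hdiag k, smul_eq_mul, sub_smul, mul_smul]
    abel_nf
    simp [two_smul]
  set s : Fin r → (V ≃ₗ[ℚ] V) := fun k => LinearEquiv.ofInvolutive (σ k) (hσinv k) with hs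
  have hsapp : ∀ k v, s k v = v - coroot k v • b k := by
    intro k v; rw [hs]; simp only [LinearEquiv.coe_ofInvolutive]; exact hσapp k v
  set W : Subgroup (V ≃ₗ[ℚ] V) := Subgroup.closure (Set.range s) with hW
  -- every element of W maps Φ bijectively to itself
  have hWbij : ∀ w ∈ W, Set.BijOn w Φ Φ := by
    intro w hw
    induction hw using Subgroup.closure_induction with
    | mem g hg =>
      obtain ⟨k, rfl⟩ := hg
      refine (Set.Finite.injOn_iff_bijOn_of_mapsTo hΦfin ?_).mp ?_
      · intro β hβ
        rw [hsapp]
        exact hΦrefl β hβ k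
      · exact (s k).injective.injOn
    | one => simpa using Set.bijOn_id Φ
    | mul g₁ g₂ hg₁ hg₂ ih₁ ih₂ =>
      have : ((g₁ * g₂ : V ≃ₗ[ℚ] V) : V → V) = (g₁ : V → V) ∘ (g₂ : V → V) := rfl
      rw [this]
      exact ih₁.comp ih₂
    | inv g hg ih =>
      have h1 : ((g⁻¹ : V ≃ₗ[ℚ] V) : V → V) = g.symm := rfl
      rw [h1]
      exact Set.BijOn.symm ⟨fun v _ => g.apply_symm_apply v,
        fun v _ => g.symm_apply_apply v⟩ ih
  -- W is finite
  haveI : Finite Φ := hΦfin.to_subtype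
  haveI : Finite W := by
    have hF : Function.Injective (fun (w : W) (p : Φ) =>
        (⟨w.1 p.1, (hWbij w.1 w.2).mapsTo p.2⟩ : Φ)) := by
      intro w₁ w₂ h
      have hb : ∀ j, w₁.1 (b j) = w₂.1 (b j) := by
        intro j
        exact congrArg Subtype.val (congrFun h ⟨b j, hΦroot j⟩)
      apply Subtype.ext
      apply LinearEquiv.toLinearMap_injective
      exact b.ext hb
    exact Finite.of_injective _ hF
  haveI : Fintype W := Fintype.ofFinite W
  -- bilinear forms
  set B₀ : V →ₗ[ℚ] V →ₗ[ℚ] ℚ := ∑ j : Fin r, (x j).smulRight (x j) with hB₀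
  have hB₀app : ∀ v w, B₀ v w = ∑ j : Fin r, x j v * x j w := by
    intro v w; simp [hB₀, LinearMap.sum_apply, smul_eq_mul]
  have hB₀symm : ∀ v w, B₀ v w = B₀ w v := by
    intro v w; simp only [hB₀app]; exact Finset.sum_congr rfl fun j _ => mul_comm _ _
  have hB₀nn : ∀ v, 0 ≤ B₀ v v := by
    intro v; rw [hB₀app]; exact Finset.sum_nonneg fun j _ => mul_self_nonneg _
  have hB₀pos : ∀ v, v ≠ 0 → 0 < B₀ v v := by
    intro v hv
    rw [hB₀app]
    obtain ⟨j, hj⟩ : ∃ j, b.repr v j ≠ 0 := by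
      by_contra hcon
      push_neg at hcon
      apply hv
      apply b.repr.injective
      ext j
      simp [hcon j]
    refine Finset.sum_pos' (fun k _ => mul_self_nonneg _) ⟨j, Finset.mem_univ j, ?_⟩
    exact mul_self_pos.mpr (by rw [hxcoord]; exact hj)
  set B : V →ₗ[ℚ] V →ₗ[ℚ] ℚ :=
    ∑ g : W, B₀.compl₁₂ (g.1 : V →ₗ[ℚ] V) (g.1 : V →ₗ[ℚ] V) with hB
  have hBapp : ∀ v w, B v w = ∑ g : W, B₀ (g.1 v) (g.1 w) := by
    intro v w
    simp [hB, LinearMap.sum_apply, LinearMap.compl₁₂_apply]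
  have hBsymm : ∀ v w, B v w = B w v := by
    intro v w
    rw [hBapp, hBapp]
    exact Finset.sum_congr rfl fun g _ => hB₀symm _ _
  have hBpos : ∀ v, v ≠ 0 → 0 < B v v := by
    intro v hv
    rw [hBapp]
    refine Finset.sum_pos' (fun g _ => hB₀nn _) ⟨1, Finset.mem_univ _, ?_⟩
    exact hB₀pos v hv
  -- invariance under simple reflections
  have hsform : ∀ (k : Fin r) (z w : V), B (s k z) (s k w) = B z w := by
    intro k z w
    have hk : s k ∈ W := Subgroup.subset_closure (Set.mem_range_self k)
    rw [hBapp, hBapp]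
    exact Fintype.sum_equiv (Equiv.mulRight (⟨s k, hk⟩ : W)) _ _ fun g => rfl
  clear_value B
  clear_value σ s W B₀
  set d : Fin r → ℚ := fun k => B (b k) (b k) with hd
  have hdpos : ∀ k, 0 < d k := fun k => hBpos _ (b.ne_zero k)
  have hform : ∀ (k : Fin r) (z : V), coroot k z * d k = 2 * B z (b k) := by
    intro k z
    have h1 := hsform k z (b k)
    have h2 : s k (b k) = - b k := by
      rw [hsapp, hdiag, two_smul]
      abel
    rw [hsapp k z, h2] at h1
    simp only [map_sub, map_smul, map_neg, LinearMap.sub_apply, LinearMap.neg_apply,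
      LinearMap.smul_apply, smul_eq_mul, hd] at h1 ⊢
    linarith
  clear_value d
  -- the vector u and its coordinates
  set u : V := ϖ i - v₁ with hu
  set c : Fin r → ℚ := fun j => b.repr u j with hc
  have hcx : ∀ j, x j u = c j := fun j => hxcoord j u
  have hsupp1 : ∀ j, j ∉ I₁ → c j = 0 := by
    intro j hj
    rw [← hcx]
    exact hv₁J j (Finset.mem_compl.mpr hj)
  have hsupp2 : ∀ j, j ∉ I₂ → c j = 0 := by
    intro j hj
    rw [← hcx, hu, heq]
    exact hv₂J j (Finset.mem_compl.mpr hj)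
  have hpair : ∀ k, (k ∈ I₁ ∨ k ∈ I₂) → coroot k u = if i = k then 1 else 0 := by
    intro k hk
    rw [hu, map_sub]
    rcases hk with hk | hk
    · rw [hv₁I k hk, hϖ, sub_zero]
    · rw [heq, hv₂I k hk, hϖ, sub_zero]
  set Pos : Finset (Fin r) := Finset.univ.filter (fun j => 0 < c j) with hPos
  set Neg : Finset (Fin r) := Finset.univ.filter (fun j => c j < 0) with hNeg
  have hPmem : ∀ j, j ∈ Pos ↔ 0 < c j := by
    intro j; rw [hPos]; simp
  have hNmem : ∀ j, j ∈ Neg ↔ c j < 0 := by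
    intro j; rw [hNeg]; simp
  have hPsub1 : ∀ j ∈ Pos, j ∈ I₁ := by
    intro j hj
    by_contra h
    exact absurd (hsupp1 j h) (ne_of_gt ((hPmem j).mp hj))
  have hPsub2 : ∀ j ∈ Pos, j ∈ I₂ := by
    intro j hj
    by_contra h
    exact absurd (hsupp2 j h) (ne_of_gt ((hPmem j).mp hj))
  have hNsub1 : ∀ j ∈ Neg, j ∈ I₁ := by
    intro j hj
    by_contra h
    exact absurd (hsupp1 j h) (ne_of_lt ((hNmem j).mp hj))
  set uneg : V := ∑ k ∈ Neg, (-c k) • b k with huneg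
  set upos : V := ∑ k ∈ Pos, c k • b k with hupos
  have hdisj : Disjoint Pos Neg := by
    rw [Finset.disjoint_left]
    intro j h1 h2
    exact absurd ((hPmem j).mp h1) (not_lt.mpr ((hNmem j).mp h2).le)
  have hdecomp : u = upos - uneg := by
    have e1 : u = ∑ j : Fin r, c j • b j := (b.sum_repr u).symm
    have e2 : ∑ j : Fin r, c j • b j = ∑ j ∈ Pos ∪ Neg, c j • b j := by
      refine (Finset.sum_subset (Finset.subset_univ _) ?_).symm
      intro j _ hj
      have hj1 : ¬ (0 < c j) := fun h => hj (Finset.mem_union_left _ ((hPmem j).mpr h))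
      have hj2 : ¬ (c j < 0) := fun h => hj (Finset.mem_union_right _ ((hNmem j).mpr h))
      have : c j = 0 := le_antisymm (not_lt.mp hj1) (not_lt.mp hj2)
      rw [this, zero_smul]
    rw [e1, e2, Finset.sum_union hdisj, hupos, huneg, sub_eq_add_neg, ← Finset.sum_neg_distrib]
    congr 1
    exact Finset.sum_congr rfl fun j _ => by rw [neg_smul, neg_neg]
  have hBleft : ∀ (T : Finset (Fin r)) (f : Fin r → ℚ) (w : V),
      B (∑ k ∈ T, f k • b k) w = ∑ k ∈ T, f k * B (b k) w := by
    intro T f w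
    simp [map_sum, LinearMap.sum_apply, smul_eq_mul]
  have hBright : ∀ (z : V) (T : Finset (Fin r)) (f : Fin r → ℚ),
      B z (∑ k ∈ T, f k • b k) = ∑ k ∈ T, f k * B z (b k) := by
    intro z T f
    simp [map_sum, smul_eq_mul]
  -- B (b k) u ≥ 0 for k in I₁ ∪ I₂
  have hBku : ∀ k, (k ∈ I₁ ∨ k ∈ I₂) → 2 * B (b k) u = (if i = k then 1 else 0) * d k := by
    intro k hk
    rw [← hBsymm u (b k), ← hform k u, hpair k hk]
  have hun_u : 0 ≤ B uneg u := by
    rw [huneg, hBleft]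
    apply Finset.sum_nonneg
    intro k hk
    have hck : c k < 0 := (hNmem k).mp hk
    have h2 := hBku k (Or.inl (hNsub1 k hk))
    have hdk := hdpos k
    have : 0 ≤ B (b k) u := by
      by_cases hik : i = k
      · rw [if_pos hik] at h2; linarith
      · rw [if_neg hik] at h2; linarith
    exact mul_nonneg (by linarith) this
  have hun_up : B uneg upos ≤ 0 := by
    rw [huneg, hBleft]
    apply Finset.sum_nonpos
    intro k hk
    have hck : c k < 0 := (hNmem k).mp hk
    have hBk : B (b k) upos ≤ 0 := by
      rw [hupos, hBright]
      apply Finset.sum_nonpos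
      intro j hj
      have hcj : 0 < c j := (hPmem j).mp hj
      have hjk : j ≠ k := fun h => absurd hcj (not_lt.mpr (h ▸ hck).le)
      have hBkj : B (b k) (b j) ≤ 0 := by
        have h1 := hform k (b j)
        have h2 := hoff j k hjk
        have h3 := hdpos k
        have h4 := hBsymm (b k) (b j)
        have h5 : coroot k (b j) * d k ≤ 0 := mul_nonpos_of_nonpos_of_nonneg h2 h3.le
        linarith
      exact mul_nonpos_of_nonneg_of_nonpos hcj.le hBkj
    exact mul_nonpos_of_nonneg_of_nonpos (by linarith) hBk
  have hun2 : B uneg uneg ≤ 0 := by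
    have e : B uneg u = B uneg upos - B uneg uneg := by
      rw [hdecomp, map_sub]
    linarith
  have huneg0 : uneg = 0 := by
    by_contra h
    exact absurd hun2 (not_le.mpr (hBpos _ h))
  have hcnn : ∀ k, 0 ≤ c k := by
    intro k
    by_contra h
    push_neg at h
    have hk : k ∈ Neg := (hNmem k).mpr h
    have e : x k uneg = -c k := by
      rw [huneg, map_sum]
      simp only [map_smul, hx, smul_eq_mul, mul_ite, mul_one, mul_zero]
      rw [Finset.sum_ite_eq' Neg k (fun j => -c j)]
      rw [if_pos hk]
    rw [huneg0, map_zero] at e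
    exact absurd e.symm (by simpa using ne_of_lt h)
  have hufin : u = ∑ j ∈ Pos, c j • b j := by
    rw [hdecomp, huneg0, sub_zero, hupos]
  have hune0 : u ≠ 0 := by
    intro h0
    have := hpair i (Or.inl hi₁)
    rw [h0, map_zero, if_pos rfl] at this
    exact one_ne_zero this.symm
  have hiPos : i ∈ Pos := by
    by_contra h
    have hBuu : B u u = 0 := by
      nth_rewrite 1 [hufin]
      rw [hBleft]
      apply Finset.sum_eq_zero
      intro k hk
      have hik : i ≠ k := fun e => h (e ▸ hk)
      have h2 := hBku k (Or.inl (hPsub1 k hk))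
      rw [if_neg hik, zero_mul] at h2
      have : B (b k) u = 0 := by linarith
      rw [this, mul_zero]
    exact absurd hBuu (ne_of_gt (hBpos u hune0))
  -- key step : no edges leave Pos within I₁ ∪ I₂
  have hstep : ∀ k, (k ∈ I₁ ∨ k ∈ I₂) → k ∉ Pos → ∀ j ∈ Pos,
      coroot k (b j) = 0 ∧ coroot j (b k) = 0 := by
    intro k hk hkP
    have hki : i ≠ k := fun h => hkP (h ▸ hiPos)
    have hsum : ∑ j ∈ Pos, c j * coroot k (b j) = 0 := by
      have h1 : coroot k u = ∑ j ∈ Pos, c j * coroot k (b j) := by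
        conv_lhs => rw [hufin]
        simp [map_sum, map_smul, smul_eq_mul]
      rw [← h1, hpair k hk, if_neg hki]
    have hnp : ∀ j ∈ Pos, c j * coroot k (b j) ≤ 0 := by
      intro j hj
      have hcj : 0 < c j := (hPmem j).mp hj
      have hjk : j ≠ k := fun h => hkP (h ▸ hj)
      exact mul_nonpos_of_nonneg_of_nonpos hcj.le (hoff j k hjk)
    intro j hj
    have h0 := (Finset.sum_eq_zero_iff_of_nonpos hnp).mp hsum j hj
    have hcj : 0 < c j := (hPmem j).mp hj
    have hkj : coroot k (b j) = 0 := (mul_eq_zero.mp h0).resolve_left (ne_of_gt hcj)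
    refine ⟨hkj, ?_⟩
    have h1 := hform k (b j)
    have h2 := hform j (b k)
    have h3 := hBsymm (b k) (b j)
    have h4 := hdpos j
    rw [hkj, zero_mul] at h1
    have h5 : B (b k) (b j) = 0 := by linarith
    rw [h5, mul_zero] at h2
    rcases mul_eq_zero.mp h2 with h | h
    · exact h
    · exact absurd h (ne_of_gt h4)
  -- walk argument
  have hwalk : ∀ (I : Finset (Fin r)),
      ((SimpleGraph.fromRel fun a c : Fin r => coroot c (b a) ≠ 0).induce
        (↑I : Set (Fin r))).Connected →
      i ∈ I → (∀ k ∈ I, k ∈ I₁ ∨ k ∈ I₂) → ∀ k ∈ I, k ∈ Pos := by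
    intro I hconn hiI hIsub k hkI
    obtain ⟨w⟩ := hconn.preconnected ⟨i, by exact_mod_cast hiI⟩ ⟨k, by exact_mod_cast hkI⟩
    have key : ∀ (p q : (↑I : Set (Fin r)))
        (w : ((SimpleGraph.fromRel fun a c : Fin r => coroot c (b a) ≠ 0).induce
          (↑I : Set (Fin r))).Walk p q), p.1 ∈ Pos → q.1 ∈ Pos := by
      intro p q w
      induction w with
      | nil => exact id
      | @cons p m q hadj pw ih =>
        intro hp
        apply ih
        simp only [SimpleGraph.induce, SimpleGraph.comap_adj, SimpleGraph.fromRel_adj] at hadj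
        by_contra hmid
        have hmI : m.1 ∈ I₁ ∨ m.1 ∈ I₂ := hIsub m.1 (by exact_mod_cast m.2)
        obtain ⟨e1, e2⟩ := hstep m.1 hmI hmid p.1 hp
        rcases hadj.2 with h | h
        · exact h e1
        · exact h e2
    exact key _ _ w hiPos
  have hI1P : ∀ k ∈ I₁, k ∈ Pos := hwalk I₁ hconn₁ hi₁ (fun k hk => Or.inl hk)
  have hI2P : ∀ k ∈ I₂, k ∈ Pos := hwalk I₂ hconn₂ hi₂ (fun k hk => Or.inr hk)
  apply hne
  ext j
  constructor
  · intro hj; exact hPsub2 j (hI1P j hj)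
  · intro hj; exact hPsub1 j (hI2P j hj)
end

section
/- Fix an index i. The set of μ ∈ V such that (ϖ_i, μ) spans an extremal ray of the Kostka cone 𝒦 is exactly {ϖ_i} ∪ {v_{I,I^c}(ϖ_i) : I ⊆ {1, …, r} connected with i ∈ I}. -/
/-- The Kostka cone `𝒦 ⊆ V × V`: pairs `(lam, mu)` of dominant weights such that
`lam - mu` is a nonnegative rational combination of the simple roots. -/
def Kostka {V : Type*} [AddCommGroup V] [Module ℚ V] {r : ℕ}
    (b : Fin r → V) (coroot : Fin r → Module.Dual ℚ V) : Set (V × V) :=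
  {p | (∀ i, 0 ≤ coroot i p.1) ∧ (∀ i, 0 ≤ coroot i p.2) ∧
    ∃ c : Fin r → ℚ, (∀ i, 0 ≤ c i) ∧ p.1 - p.2 = ∑ i, c i • b i}

section Aux
variable {V : Type*} [AddCommGroup V] [Module ℚ V] {r : ℕ}

/-- Existence of an invariant positive-definite form compatible with the coroots. -/
theorem aux_g (b : Module.Basis (Fin r) ℚ V) (coroot : Fin r → Module.Dual ℚ V)
    (hdiag : ∀ i, coroot i (b i) = 2)
    (Φ : Set V) (hΦfin : Φ.Finite) (hΦroot : ∀ i, b i ∈ Φ)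
    (hΦrefl : ∀ β ∈ Φ, ∀ i, β - coroot i β • b i ∈ Φ) :
    ∃ g : V →ₗ[ℚ] V →ₗ[ℚ] ℚ, (∀ u v, g u v = g v u) ∧ (∀ v, v ≠ 0 → 0 < g v v) ∧
      (∀ k v, 2 * g (b k) v = g (b k) (b k) * coroot k v) := by
  classical
  -- the base positive definite form
  set B0 : V →ₗ[ℚ] V →ₗ[ℚ] ℚ := LinearMap.mk₂ ℚ (fun u v => ∑ j, b.repr u j * b.repr v j)
    (by intro u u' v; simp [Finset.sum_add_distrib, add_mul])
    (by intro a u v; simp only [map_smul, Finsupp.smul_apply, smul_eq_mul, Finset.mul_sum]; exact Finset.sum_congr rfl (fun j _ => by ring))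
    (by intro u v v'; simp [Finset.sum_add_distrib, mul_add])
    (by intro a u v; simp only [map_smul, Finsupp.smul_apply, smul_eq_mul, Finset.mul_sum]; exact Finset.sum_congr rfl (fun j _ => by ring)) with hB0
  have hB0apply : ∀ u v, B0 u v = ∑ j, b.repr u j * b.repr v j := fun u v => rfl
  have hB0symm : ∀ u v, B0 u v = B0 v u := by
    intro u v; simp only [hB0apply]; exact Finset.sum_congr rfl (fun j _ => mul_comm _ _)
  have hB0nonneg : ∀ v, 0 ≤ B0 v v := by
    intro v; rw [hB0apply]; exact Finset.sum_nonneg (fun j _ => mul_self_nonneg _)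
  have hB0pos : ∀ v, v ≠ 0 → 0 < B0 v v := by
    intro v hv
    rw [hB0apply]
    have : ∃ j, b.repr v j ≠ 0 := by
      by_contra h
      push_neg at h
      exact hv (by simpa using b.repr.injective (by ext j; simpa using h j))
    obtain ⟨j, hj⟩ := this
    exact Finset.sum_pos' (fun k _ => mul_self_nonneg _)
      ⟨j, Finset.mem_univ j, mul_self_pos.mpr hj⟩
  -- reflections
  set s : Fin r → (V →ₗ[ℚ] V) := fun k => LinearMap.id - (coroot k).smulRight (b k) with hs
  have hsapply : ∀ k v, s k v = v - coroot k v • b k := fun k v => rfl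
  have hsinv : ∀ k, s k * s k = 1 := by
    intro k
    ext v
    simp only [Module.End.mul_apply, Module.End.one_apply, hsapply, map_sub, map_smul,
      hdiag k, smul_eq_mul]
    module
  -- the monoid
  set M : Submonoid (V →ₗ[ℚ] V) := Submonoid.closure (Set.range s) with hM
  have hMΦ : ∀ m ∈ M, ∀ β ∈ Φ, m β ∈ Φ := by
    intro m hm
    induction hm using Submonoid.closure_induction with
    | mem m hm =>
      obtain ⟨k, rfl⟩ := hm
      intro β hβ
      rw [hsapply]
      exact hΦrefl β hβ k
    | one => simpa using fun β hβ => hβ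
    | mul m n hm hn ihm ihn =>
      intro β hβ
      rw [Module.End.mul_apply]
      exact ihm _ (ihn β hβ)
  have hMfin : (M : Set (V →ₗ[ℚ] V)).Finite := by
    have hinj : Set.InjOn (fun m : V →ₗ[ℚ] V => fun j => m (b j)) (M : Set _) := by
      intro m₁ _ m₂ _ h
      exact b.ext (fun j => congrFun h j)
    apply Set.Finite.of_finite_image _ hinj
    apply Set.Finite.subset (Set.Finite.pi (fun _ : Fin r => hΦfin))
    rintro f ⟨m, hm, rfl⟩
    intro j _
    exact hMΦ m hm (b j) (hΦroot j)
  set F : Finset (V →ₗ[ℚ] V) := hMfin.toFinset with hF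
  have h1F : (1 : V →ₗ[ℚ] V) ∈ F := by
    simp only [hF, Set.Finite.mem_toFinset]
    exact M.one_mem
  have hsF : ∀ k, ∀ m ∈ F, m * s k ∈ F := by
    intro k m hm
    simp only [hF, Set.Finite.mem_toFinset] at hm ⊢
    exact M.mul_mem hm (Submonoid.subset_closure ⟨k, rfl⟩)
  -- the averaged form
  refine ⟨LinearMap.mk₂ ℚ (fun u v => ∑ m ∈ F, B0 (m u) (m v))
    (by intro u u' v; simp [Finset.sum_add_distrib])
    (by intro a u v; simp [Finset.mul_sum])
    (by intro u v v'; simp [Finset.sum_add_distrib])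
    (by intro a u v; simp [Finset.mul_sum]), ?_, ?_, ?_⟩
  · intro u v
    simp only [LinearMap.mk₂_apply]
    exact Finset.sum_congr rfl (fun m _ => hB0symm _ _)
  · intro v hv
    simp only [LinearMap.mk₂_apply]
    have h1 : 0 < B0 ((1 : V →ₗ[ℚ] V) v) ((1 : V →ₗ[ℚ] V) v) := by
      simpa using hB0pos v hv
    calc (0:ℚ) < B0 ((1 : V →ₗ[ℚ] V) v) ((1 : V →ₗ[ℚ] V) v) := h1
    _ ≤ ∑ m ∈ F, B0 (m v) (m v) :=
        Finset.single_le_sum (fun m _ => hB0nonneg _) h1F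
  · -- key identity
    intro k v
    -- invariance under s k
    have hinvariance : ∀ u w : V, (∑ m ∈ F, B0 (m (s k u)) (m (s k w))) = ∑ m ∈ F, B0 (m u) (m w) := by
      intro u w
      rw [Finset.sum_nbij' (i := fun m => m * s k) (j := fun m => m * s k)]
      · intro m hm; exact hsF k m hm
      · intro m hm; exact hsF k m hm
      · intro m _; rw [mul_assoc, hsinv k, mul_one]
      · intro m _; rw [mul_assoc, hsinv k, mul_one]
      · intro m _
        simp [Module.End.mul_apply]
    have hker : ∀ w, coroot k w = 0 → (∑ m ∈ F, B0 (m (b k)) (m w)) = 0 := by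
      intro w hw
      have h1 : s k (b k) = -(b k) := by
        rw [hsapply, hdiag k]; module
      have h2 : s k w = w := by rw [hsapply, hw]; module
      have := hinvariance (b k) w
      rw [h1, h2] at this
      simp only [map_neg, LinearMap.neg_apply, map_neg] at this
      rw [Finset.sum_neg_distrib] at this
      linarith
    simp only [LinearMap.mk₂_apply]
    set w' : V := v - (coroot k v / 2) • b k with hw'
    have hcw' : coroot k w' = 0 := by
      simp only [hw', map_sub, map_smul, hdiag k, smul_eq_mul]
      ring
    have hexp : v = w' + (coroot k v / 2) • b k := by rw [hw']; module
    have : (∑ m ∈ F, B0 (m (b k)) (m v))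
        = (∑ m ∈ F, B0 (m (b k)) (m w')) + (coroot k v / 2) * ∑ m ∈ F, B0 (m (b k)) (m (b k)) := by
      conv_lhs => rw [hexp]
      simp only [map_add, map_smul, LinearMap.smul_apply, smul_eq_mul]
      rw [Finset.sum_add_distrib, Finset.mul_sum]
    rw [this, hker w' hcw']
    ring

end Aux

set_option maxHeartbeats 1000000 in
/-- Fix an index `i`.  The set of `mu ∈ V` such that `(ϖ_i, mu)` spans
an extremal ray of the Kostka cone `𝒦` is exactly
`{ϖ_i} ∪ {v_{I,Iᶜ}(ϖ_i) : I ⊆ {1, …, r}` connected with `i ∈ I}`. -/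


theorem stmt_15 {V : Type*} [AddCommGroup V] [Module ℚ V] {r : ℕ}
    (b : Module.Basis (Fin r) ℚ V) (coroot : Fin r → Module.Dual ℚ V)
    (hdiag : ∀ i, coroot i (b i) = 2)
    (hoff : ∀ i j : Fin r, i ≠ j → coroot j (b i) ≤ 0)
    (hint : ∀ i j : Fin r, ∃ n : ℤ, coroot j (b i) = (n : ℚ))
    (Φ : Set V) (hΦfin : Φ.Finite) (hΦroot : ∀ i, b i ∈ Φ)
    (hΦrefl : ∀ β ∈ Φ, ∀ i, β - coroot i β • b i ∈ Φ)
    (x : Fin r → Module.Dual ℚ V)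
    (hx : ∀ i j : Fin r, x j (b i) = if i = j then 1 else 0)
    (ϖ : Fin r → V)
    (hϖ : ∀ i j : Fin r, coroot j (ϖ i) = if i = j then 1 else 0)
    (i : Fin r) :
    ∀ mu : V,
      ((ϖ i, mu) ≠ (0 : V × V) ∧ (ϖ i, mu) ∈ Kostka (⇑b) coroot ∧
        ∀ p q : V × V, p ∈ Kostka (⇑b) coroot → q ∈ Kostka (⇑b) coroot →
          p + q = (ϖ i, mu) →
            (∃ c : ℚ, 0 ≤ c ∧ p = c • (ϖ i, mu)) ∧
            (∃ c : ℚ, 0 ≤ c ∧ q = c • (ϖ i, mu)))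
      ↔ (mu = ϖ i ∨
          ∃ I : Finset (Fin r), i ∈ I ∧
            ((SimpleGraph.fromRel fun a c : Fin r => coroot c (b a) ≠ 0).induce
              (↑I : Set (Fin r))).Connected ∧
            (∀ k ∈ I, coroot k mu = 0) ∧ (∀ j ∈ Iᶜ, x j (ϖ i - mu) = 0)) := by
  classical
  obtain ⟨g, hgsymm, hgpos, hgkey⟩ := aux_g b coroot hdiag Φ hΦfin hΦroot hΦrefl
  have hGkk : ∀ k, 0 < g (b k) (b k) := fun k => hgpos _ (b.ne_zero k)
  have hgbk : ∀ k (v : V), g (b k) v = g (b k) (b k) * coroot k v / 2 := by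
    intro k v; have := hgkey k v; linarith
  have hϖne : ϖ i ≠ 0 := by
    intro h
    have h2 := hϖ i i
    rw [h, map_zero] at h2
    simp at h2
  -- expansion lemmas
  have hexpand : ∀ (d : Fin r → ℚ) (v : V), g (∑ j, d j • b j) v = ∑ j, d j * g (b j) v := by
    intro d v
    rw [map_sum, LinearMap.sum_apply]
    exact Finset.sum_congr rfl fun j _ => by rw [map_smul, LinearMap.smul_apply, smul_eq_mul]
  have hcexp : ∀ (d : Fin r → ℚ) (k : Fin r),
      coroot k (∑ j, d j • b j) = ∑ j, d j * coroot k (b j) := by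
    intro d k
    rw [map_sum]
    exact Finset.sum_congr rfl fun j _ => by rw [map_smul, smul_eq_mul]
  have hxexp : ∀ (d : Fin r → ℚ) (j : Fin r), x j (∑ k, d k • b k) = d j := by
    intro d j
    rw [map_sum, Finset.sum_congr rfl (fun k _ => by rw [map_smul, smul_eq_mul, hx k j])]
    simp [Finset.sum_ite_eq']
  -- the kernel lemma
  have klemd : ∀ d : Fin r → ℚ, (∀ k, d k ≠ 0 → coroot k (∑ j, d j • b j) = 0) → ∀ j, d j = 0 := by
    intro d hd
    have hw0 : (∑ j, d j • b j) = 0 := by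
      by_contra hne0
      have hpos := hgpos _ hne0
      have hz : g (∑ j, d j • b j) (∑ j, d j • b j) = 0 := by
        rw [hexpand]
        apply Finset.sum_eq_zero
        intro k _
        by_cases hk : d k = 0
        · rw [hk, zero_mul]
        · rw [hgbk, hd k hk, mul_zero, zero_div, mul_zero]
      rw [hz] at hpos
      exact lt_irrefl 0 hpos
    exact Fintype.linearIndependent_iff.mp b.linearIndependent d hw0
  have klemv : ∀ w : V, (∀ k, coroot k w = 0) → w = 0 := by
    intro w hw
    have h := klemd (fun k => b.repr w k)
      (by intro k _; show coroot k (∑ j, b.repr w j • b j) = 0; rw [b.sum_repr w]; exact hw k)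
    have h' : ∀ j, b.repr w j = 0 := h
    have h2 : w = ∑ j, b.repr w j • b j := (b.sum_repr w).symm
    rw [h2]
    exact Finset.sum_eq_zero fun j _ => by rw [h' j, zero_smul]
  have hGoff : ∀ j k, j ≠ k → g (b j) (b k) ≤ 0 := by
    intro j k hjk
    rw [hgbk j (b k)]
    have h1 := hoff k j (fun h => hjk h.symm)
    nlinarith [hGkk j]
  -- Stieltjes positivity
  have cpos : ∀ cc : Fin r → ℚ, (∀ k, cc k < 0 → 0 ≤ coroot k (∑ j, cc j • b j)) →
      ∀ k, 0 ≤ cc k := by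
    intro cc hcc
    by_contra hcon
    push_neg at hcon
    obtain ⟨k0, hk0⟩ := hcon
    set e : Fin r → ℚ := fun j => if cc j < 0 then -cc j else 0 with he
    have h1 : 0 ≤ g (∑ j, e j • b j) (∑ j, cc j • b j) := by
      rw [hexpand]
      apply Finset.sum_nonneg
      intro k _
      by_cases hk : cc k < 0
      · have hek : e k = -cc k := if_pos hk
        rw [hek, hgbk]
        exact mul_nonneg (by linarith)
          (div_nonneg (mul_nonneg (hGkk k).le (hcc k hk)) (by norm_num))
      · have hek : e k = 0 := if_neg hk
        rw [hek, zero_mul]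
    have h2 : g (∑ j, e j • b j) ((∑ j, e j • b j) + (∑ j, cc j • b j)) ≤ 0 := by
      have hsum2 : (∑ j, e j • b j) + (∑ j, cc j • b j) = ∑ j, (e j + cc j) • b j := by
        rw [← Finset.sum_add_distrib]
        exact Finset.sum_congr rfl fun j _ => (add_smul _ _ _).symm
      rw [hsum2, hexpand]
      apply Finset.sum_nonpos
      intro k _
      by_cases hk : cc k < 0
      · have hek : e k = -cc k := if_pos hk
        have hinner : g (b k) (∑ j, (e j + cc j) • b j) = ∑ j, (e j + cc j) * g (b k) (b j) := by
          rw [map_sum]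
          exact Finset.sum_congr rfl fun j _ => by rw [map_smul, smul_eq_mul]
        rw [hinner]
        apply mul_nonpos_of_nonneg_of_nonpos (by rw [hek]; linarith)
        apply Finset.sum_nonpos
        intro j _
        by_cases hjk : j = k
        · subst hjk
          rw [hek]
          have : -cc j + cc j = 0 := by ring
          rw [this, zero_mul]
        · by_cases hj : cc j < 0
          · have hej : e j = -cc j := if_pos hj
            have : e j + cc j = 0 := by rw [hej]; ring
            rw [this, zero_mul]
          · have hej : e j = 0 := if_neg hj
            have : e j + cc j = cc j := by rw [hej]; ring
            rw [this]
            exact mul_nonpos_of_nonneg_of_nonpos (by linarith [not_lt.mp hj])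
              (hGoff k j (fun h => hjk h.symm))
      · have hek : e k = 0 := if_neg hk
        rw [hek, zero_mul]
    have h3 : g (∑ j, e j • b j) (∑ j, e j • b j) ≤ 0 := by
      rw [map_add] at h2
      linarith
    have hne : (∑ j, e j • b j) ≠ 0 := by
      intro h0
      have h4 := hxexp e k0
      rw [h0, map_zero] at h4
      have h5 : e k0 = -cc k0 := if_pos hk0
      rw [h5] at h4
      linarith
    exact absurd h3 (not_le.mpr (hgpos _ hne))
  intro mu
  constructor
  · -- forward direction
    rintro ⟨hne, hK, hext⟩
    obtain ⟨hdomw, hdommu, c, hc, hsum0⟩ := hK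
    have hsum : ϖ i - mu = ∑ j, c j • b j := hsum0
    -- KL: perturbation injectivity lemma
    have KL : ∀ d : Fin r → ℚ, (∀ j, c j = 0 → d j = 0) →
        (∀ k, coroot k mu = 0 → coroot k (∑ j, d j • b j) = 0) → ∀ j, d j = 0 := by
      intro d hd1 hd2'
      by_contra hcon
      push_neg at hcon
      obtain ⟨j0, hj0⟩ := hcon
      set v : V := ∑ j, d j • b j with hvdef
      set f : Fin r → ℚ := fun k => if coroot k v = 0 then 1 else coroot k mu / |coroot k v| with hf
      set h : Fin r → ℚ := fun j => if d j = 0 then 1 else c j / |d j| with hh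
      set T : Finset ℚ := insert 1 ((Finset.univ.image f) ∪ (Finset.univ.image h)) with hT
      have hTne : T.Nonempty := ⟨1, Finset.mem_insert_self _ _⟩
      set ε : ℚ := T.min' hTne with hεdef
      have hcmupos : ∀ k, coroot k v ≠ 0 → 0 < coroot k mu := by
        intro k hkv
        rcases (hdommu k).lt_or_eq with h1 | h1
        · exact h1
        · exact absurd (hd2' k h1.symm) hkv
      have hcposd : ∀ j, d j ≠ 0 → 0 < c j := by
        intro j hdj
        rcases (hc j).lt_or_eq with h1 | h1
        · exact h1
        · exact absurd (hd1 j h1.symm) hdj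
      have hTpos : ∀ z ∈ T, 0 < z := by
        intro z hz
        rw [hT, Finset.mem_insert] at hz
        rcases hz with rfl | hz
        · norm_num
        rcases Finset.mem_union.mp hz with hz | hz
        · obtain ⟨k, -, rfl⟩ := Finset.mem_image.mp hz
          by_cases hkv : coroot k v = 0
          · simp [hf, hkv]
          · simp only [hf, if_neg hkv]
            exact div_pos (hcmupos k hkv) (abs_pos.mpr hkv)
        · obtain ⟨j, -, rfl⟩ := Finset.mem_image.mp hz
          by_cases hdj : d j = 0
          · simp [hh, hdj]
          · simp only [hh, if_neg hdj]
            exact div_pos (hcposd j hdj) (abs_pos.mpr hdj)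
      have hεpos : 0 < ε := hTpos _ (T.min'_mem hTne)
      have hbound1 : ∀ k, ε * |coroot k v| ≤ coroot k mu := by
        intro k
        by_cases hkv : coroot k v = 0
        · rw [hkv, abs_zero, mul_zero]
          exact hdommu k
        · have hle : ε ≤ f k := T.min'_le _ (by
            rw [hT]
            exact Finset.mem_insert_of_mem (Finset.mem_union_left _
              (Finset.mem_image_of_mem f (Finset.mem_univ k))))
          simp only [hf, if_neg hkv] at hle
          have habs : 0 < |coroot k v| := abs_pos.mpr hkv
          calc ε * |coroot k v| ≤ (coroot k mu / |coroot k v|) * |coroot k v| :=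
              mul_le_mul_of_nonneg_right hle habs.le
            _ = coroot k mu := div_mul_cancel₀ _ habs.ne'
      have hbound2 : ∀ j, ε * |d j| ≤ c j := by
        intro j
        by_cases hdj : d j = 0
        · rw [hdj, abs_zero, mul_zero]
          exact hc j
        · have hle : ε ≤ h j := T.min'_le _ (by
            rw [hT]
            exact Finset.mem_insert_of_mem (Finset.mem_union_right _
              (Finset.mem_image_of_mem h (Finset.mem_univ j))))
          simp only [hh, if_neg hdj] at hle
          have habs : 0 < |d j| := abs_pos.mpr hdj
          calc ε * |d j| ≤ (c j / |d j|) * |d j| :=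
              mul_le_mul_of_nonneg_right hle habs.le
            _ = c j := div_mul_cancel₀ _ habs.ne'
      have hϖdom : ∀ k, 0 ≤ coroot k ((2⁻¹ : ℚ) • ϖ i) := by
        intro k
        rw [map_smul, smul_eq_mul, hϖ]
        split <;> norm_num
      have hpK : ((2⁻¹ : ℚ) • ϖ i, (2⁻¹ : ℚ) • (mu + ε • v)) ∈ Kostka (⇑b) coroot := by
        refine ⟨hϖdom, fun k => ?_, ⟨fun j => 2⁻¹ * (c j - ε * d j), fun j => ?_, ?_⟩⟩
        · rw [map_smul, smul_eq_mul]
          have h1 := hbound1 k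
          have h2 : -(ε * |coroot k v|) ≤ ε * coroot k v := by
            nlinarith [neg_abs_le (coroot k v), hεpos.le]
          rw [map_add, map_smul, smul_eq_mul]
          nlinarith
        · have h1 := hbound2 j
          have h2 : ε * d j ≤ ε * |d j| := by nlinarith [le_abs_self (d j), hεpos.le]
          nlinarith
        · show (2⁻¹ : ℚ) • ϖ i - (2⁻¹ : ℚ) • (mu + ε • v) = ∑ j, (2⁻¹ * (c j - ε * d j)) • b j
          have e1 : (2⁻¹ : ℚ) • ϖ i - (2⁻¹ : ℚ) • (mu + ε • v)
              = (2⁻¹ : ℚ) • (ϖ i - mu) - (2⁻¹ * ε) • v := by module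
          rw [e1, hsum, hvdef, Finset.smul_sum, Finset.smul_sum, ← Finset.sum_sub_distrib]
          refine Finset.sum_congr rfl fun j _ => ?_
          rw [smul_smul, smul_smul, ← sub_smul]
          congr 1
          ring
      have hqK : ((2⁻¹ : ℚ) • ϖ i, (2⁻¹ : ℚ) • (mu - ε • v)) ∈ Kostka (⇑b) coroot := by
        refine ⟨hϖdom, fun k => ?_, ⟨fun j => 2⁻¹ * (c j + ε * d j), fun j => ?_, ?_⟩⟩
        · rw [map_smul, smul_eq_mul]
          have h1 := hbound1 k
          have h2 : ε * coroot k v ≤ ε * |coroot k v| := by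
            nlinarith [le_abs_self (coroot k v), hεpos.le]
          rw [map_sub, map_smul, smul_eq_mul]
          nlinarith
        · have h1 := hbound2 j
          have h2 : -(ε * |d j|) ≤ ε * d j := by nlinarith [neg_abs_le (d j), hεpos.le]
          nlinarith
        · show (2⁻¹ : ℚ) • ϖ i - (2⁻¹ : ℚ) • (mu - ε • v) = ∑ j, (2⁻¹ * (c j + ε * d j)) • b j
          have e1 : (2⁻¹ : ℚ) • ϖ i - (2⁻¹ : ℚ) • (mu - ε • v)
              = (2⁻¹ : ℚ) • (ϖ i - mu) + (2⁻¹ * ε) • v := by module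
          rw [e1, hsum, hvdef, Finset.smul_sum, Finset.smul_sum, ← Finset.sum_add_distrib]
          refine Finset.sum_congr rfl fun j _ => ?_
          rw [smul_smul, smul_smul, ← add_smul]
          congr 1
          ring
      have hpq : ((2⁻¹ : ℚ) • ϖ i, (2⁻¹ : ℚ) • (mu + ε • v))
          + ((2⁻¹ : ℚ) • ϖ i, (2⁻¹ : ℚ) • (mu - ε • v)) = (ϖ i, mu) := by
        rw [Prod.mk_add_mk, Prod.mk.injEq]
        constructor <;> module
      obtain ⟨⟨t, ht0, htp⟩, -⟩ := hext _ _ hpK hqK hpq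
      rw [Prod.smul_mk, Prod.mk.injEq] at htp
      obtain ⟨h1, h2⟩ := htp
      have ht : t = 2⁻¹ := by
        by_contra hne'
        have h3 : ((2⁻¹ : ℚ) - t) • ϖ i = 0 := by rw [sub_smul, h1, sub_self]
        rcases smul_eq_zero.mp h3 with h4 | h4
        · exact hne' (by linarith [sub_eq_zero.mp h4])
        · exact hϖne h4
      rw [ht] at h2
      have h5 : ε • v = 0 := by
        have h6 : (2⁻¹ : ℚ) • (mu + ε • v) - (2⁻¹ : ℚ) • mu = (2⁻¹ : ℚ) • (ε • v) := by module
        rw [h2, sub_self] at h6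
        rcases smul_eq_zero.mp h6.symm with h7 | h7
        · norm_num at h7
        · exact h7
      have hv0 : v = 0 := by
        rcases smul_eq_zero.mp h5 with h7 | h7
        · exact absurd h7 hεpos.ne'
        · exact h7
      have hall := Fintype.linearIndependent_iff.mp b.linearIndependent d
        (by rw [← hvdef]; exact hv0)
      exact hj0 (hall j0)
    by_cases hS : ∀ j, c j = 0
    · left
      have h0 : ϖ i - mu = 0 := by
        rw [hsum]
        exact Finset.sum_eq_zero fun j _ => by rw [hS j, zero_smul]
      have := sub_eq_zero.mp h0
      exact this.symm
    · right
      push_neg at hS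
      set I : Finset (Fin r) := Finset.univ.filter (fun j => c j ≠ 0) with hI
      have hmemI : ∀ j, j ∈ I ↔ c j ≠ 0 := fun j => by rw [hI]; simp
      -- (a) coroot i mu = 0
      have hiZ : coroot i mu = 0 := by
        by_contra hiz
        have hall := KL c (fun j hj => hj) ?_
        · obtain ⟨j0, hj0⟩ := hS
          exact hj0 (hall j0)
        · intro k hk
          have hki : k ≠ i := fun h => hiz (h ▸ hk)
          rw [← hsum, map_sub, hϖ i k, if_neg (fun h => hki h.symm), hk, sub_zero]
      -- (b) c i ≠ 0
      have hiS : c i ≠ 0 := by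
        intro hci
        have h1 : coroot i (ϖ i - mu) = 1 := by
          rw [map_sub, hϖ, hiZ]
          simp
        rw [hsum, hcexp] at h1
        have h2 : (∑ j, c j * coroot i (b j)) ≤ 0 := by
          apply Finset.sum_nonpos
          intro j _
          by_cases hji : j = i
          · rw [hji, hci, zero_mul]
          · exact mul_nonpos_of_nonneg_of_nonpos (hc j) (hoff j i hji)
        linarith
      have hiI : i ∈ I := (hmemI i).mpr hiS
      -- (c) edges
      have hedge : ∀ j k, c j ≠ 0 → coroot k mu = 0 → c k = 0 → coroot k (b j) = 0 := by
        intro j k hj hk hck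
        have hki : k ≠ i := fun h => hiS (h ▸ hck)
        have h1 : coroot k (ϖ i - mu) = 0 := by
          rw [map_sub, hϖ, hk, if_neg (fun h => hki h.symm), sub_zero]
        rw [hsum, hcexp] at h1
        have h2 : ∀ l ∈ Finset.univ, c l * coroot k (b l) ≤ 0 := by
          intro l _
          by_cases hlk : l = k
          · rw [hlk, hck, zero_mul]
          · exact mul_nonpos_of_nonneg_of_nonpos (hc l) (hoff l k hlk)
        have h3 := (Finset.sum_eq_zero_iff_of_nonpos h2).mp h1 j (Finset.mem_univ j)
        rcases mul_eq_zero.mp h3 with h4 | h4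
        · exact absurd h4 hj
        · exact h4
      -- (d) support contained in zero set
      have hSZ : ∀ k, c k ≠ 0 → coroot k mu = 0 := by
        by_contra hcon
        push_neg at hcon
        obtain ⟨k1, hk1c, hk1m⟩ := hcon
        set ZS : Finset (Fin r) := Finset.univ.filter (fun k => coroot k mu = 0 ∧ c k ≠ 0) with hZS
        have hZSsub : ZS ⊆ I := by
          intro k hk
          rw [hZS, Finset.mem_filter] at hk
          exact (hmemI k).mpr hk.2.2
        have hZSne : ZS ≠ I := by
          intro hEq
          have h1 : k1 ∈ I := (hmemI k1).mpr hk1c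
          rw [← hEq, hZS, Finset.mem_filter] at h1
          exact hk1m h1.2.1
        set L : ((↥I) → ℚ) →ₗ[ℚ] ((↥ZS) → ℚ) :=
          LinearMap.pi (fun k => (coroot (k : Fin r)).comp
            (Fintype.linearCombination ℚ (fun j : ↥I => (b (j : Fin r) : V)))) with hL
        have hLapply : ∀ (d : ↥I → ℚ) (k : ↥ZS),
            L d k = coroot (k : Fin r) (∑ j : ↥I, d j • b (j : Fin r)) := by
          intro d k
          simp only [hL, LinearMap.pi_apply, LinearMap.comp_apply,
            Fintype.linearCombination_apply]
        have hLinj : Function.Injective L := by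
          have hker : ∀ d : ↥I → ℚ, L d = 0 → d = 0 := by
            intro d hd0
            set d' : Fin r → ℚ := fun j => if hj : j ∈ I then d ⟨j, hj⟩ else 0 with hd'
            have hsum' : (∑ j, d' j • b j) = ∑ j : ↥I, d j • b (j : Fin r) := by
              have h1 : (∑ j, d' j • b j) = ∑ j ∈ I, d' j • b j := by
                refine (Finset.sum_subset (Finset.subset_univ I) ?_).symm
                intro j _ hj
                simp only [hd']
                rw [dif_neg hj, zero_smul]
              rw [h1, ← Finset.sum_coe_sort I (fun j => d' j • b j)]
              refine Finset.sum_congr rfl fun j _ => ?_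
              simp only [hd']
              rw [dif_pos j.2]
            have hd'0 : ∀ j, d' j = 0 := by
              apply KL d'
              · intro j hcj
                simp only [hd']
                rw [dif_neg (fun hjI => ((hmemI j).mp hjI) hcj)]
              · intro k hk
                rw [hsum']
                by_cases hck : c k = 0
                · rw [map_sum]
                  apply Finset.sum_eq_zero
                  intro j _
                  rw [map_smul, hedge (j : Fin r) k ((hmemI _).mp j.2) hk hck, smul_zero]
                · have hkZS : k ∈ ZS := by
                    rw [hZS, Finset.mem_filter]
                    exact ⟨Finset.mem_univ k, hk, hck⟩
                  have h2 := congrFun hd0 ⟨k, hkZS⟩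
                  rw [hLapply] at h2
                  exact h2
            funext j
            have h3 := hd'0 (j : Fin r)
            simp only [hd'] at h3
            rw [dif_pos j.2] at h3
            exact h3
          intro d1 d2 h12
          have h4 := hker (d1 - d2) (by rw [map_sub, h12, sub_self])
          exact sub_eq_zero.mp h4
        have hcard := LinearMap.finrank_le_finrank_of_injective hLinj
        rw [Module.finrank_pi, Module.finrank_pi, Fintype.card_coe, Fintype.card_coe] at hcard
        exact hZSne (Finset.eq_of_subset_of_card_le hZSsub hcard)
      -- (e) connectivity
      have hiI' : i ∈ (↑I : Set (Fin r)) := Finset.mem_coe.mpr hiI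
      set GI := (SimpleGraph.fromRel fun a c : Fin r => coroot c (b a) ≠ 0).induce
        (↑I : Set (Fin r)) with hGI
      have hadj0 : ∀ (j k : Fin r) (hj : j ∈ (↑I : Set (Fin r))) (hk : k ∈ (↑I : Set (Fin r))),
          j ≠ k → (coroot k (b j) ≠ 0 ∨ coroot j (b k) ≠ 0) → GI.Adj ⟨j, hj⟩ ⟨k, hk⟩ := by
        intro j k hj hk hjk hor
        rw [hGI]
        simp only [SimpleGraph.comap_adj, Function.Embedding.coe_subtype, SimpleGraph.fromRel_adj]
        exact ⟨hjk, hor⟩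
      have hreach : ∀ v0 : (↑I : Set (Fin r)), GI.Reachable ⟨i, hiI'⟩ v0 := by
        intro v0
        by_contra hnr
        set d : Fin r → ℚ := fun j =>
          if hj : ∃ h : j ∈ (↑I : Set (Fin r)), GI.Reachable ⟨j, h⟩ v0 then c j else 0 with hd
        have hd1 : ∀ j, c j = 0 → d j = 0 := by
          intro j hcj
          simp only [hd]
          split
          · exact hcj
          · rfl
        have hd2' : ∀ k, coroot k mu = 0 → coroot k (∑ j, d j • b j) = 0 := by
          intro k hk
          rw [hcexp]
          by_cases hck : c k = 0
          · apply Finset.sum_eq_zero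
            intro j _
            by_cases hdj : d j = 0
            · rw [hdj, zero_mul]
            · rw [hedge j k (fun hcj => hdj (hd1 j hcj)) hk hck, mul_zero]
          · have hkI : k ∈ I := (hmemI k).mpr hck
            have hkI' : k ∈ (↑I : Set (Fin r)) := Finset.mem_coe.mpr hkI
            by_cases hkr : ∃ hkm : k ∈ (↑I : Set (Fin r)), GI.Reachable ⟨k, hkm⟩ v0
            · obtain ⟨hkm, hre⟩ := hkr
              have hterm : ∀ j, d j * coroot k (b j) = c j * coroot k (b j) := by
                intro j
                by_cases hr : ∃ hjm : j ∈ (↑I : Set (Fin r)), GI.Reachable ⟨j, hjm⟩ v0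
                · simp only [hd]
                  rw [dif_pos hr]
                · simp only [hd]
                  rw [dif_neg hr, zero_mul]
                  by_cases hcj : c j = 0
                  · rw [hcj, zero_mul]
                  · have hjI' : j ∈ (↑I : Set (Fin r)) :=
                      Finset.mem_coe.mpr ((hmemI j).mpr hcj)
                    have hAjk : coroot k (b j) = 0 := by
                      by_contra hA
                      have hjk : j ≠ k := by
                        rintro rfl
                        exact hr ⟨hjI', hre⟩
                      exact hr ⟨hjI',
                        ((hadj0 j k hjI' hkI' hjk (Or.inl hA)).reachable).trans hre⟩
                    rw [hAjk, mul_zero]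
              rw [Finset.sum_congr rfl fun j _ => hterm j, ← hcexp c k, ← hsum]
              have hki : k ≠ i := by
                rintro rfl
                exact hnr hre
              rw [map_sub, hϖ, hk, if_neg (fun hik => hki hik.symm), sub_zero]
            · apply Finset.sum_eq_zero
              intro j _
              by_cases hdj : d j = 0
              · rw [hdj, zero_mul]
              · have hr : ∃ hjm : j ∈ (↑I : Set (Fin r)), GI.Reachable ⟨j, hjm⟩ v0 := by
                  by_contra hcontra
                  apply hdj
                  simp only [hd]
                  rw [dif_neg hcontra]
                obtain ⟨hjm, hre⟩ := hr
                have hAjk : coroot k (b j) = 0 := by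
                  by_contra hA
                  have hjk : k ≠ j := by
                    rintro rfl
                    exact hkr ⟨hjm, hre⟩
                  exact hkr ⟨hkI',
                    ((hadj0 k j hkI' hjm hjk (Or.inr hA)).reachable).trans hre⟩
                rw [hAjk, mul_zero]
        have h0 := KL d hd1 hd2'
        have hv0I : (v0 : Fin r) ∈ I := Finset.mem_coe.mp v0.2
        have hdv0 : d (v0 : Fin r) = c (v0 : Fin r) := by
          simp only [hd]
          rw [dif_pos ⟨v0.2, SimpleGraph.Reachable.refl v0⟩]
        rw [h0 (v0 : Fin r)] at hdv0
        exact ((hmemI _).mp hv0I) hdv0.symm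
      refine ⟨I, hiI, ?_, fun k hk => hSZ k ((hmemI k).mp hk), fun j hj => ?_⟩
      · rw [SimpleGraph.connected_iff]
        exact ⟨fun u v => (hreach u).symm.trans (hreach v), ⟨⟨i, hiI'⟩⟩⟩
      · rw [hsum, hxexp]
        by_contra hcj
        exact (Finset.mem_compl.mp hj) ((hmemI j).mpr hcj)
  · -- backward direction
    rintro (rfl | ⟨I, hiI, hconn, hμI, hcI⟩)
    · -- case mu = ϖ i
      refine ⟨?_, ⟨fun k => ?_, fun k => ?_, ⟨fun _ => 0, fun j => le_refl 0, by simp⟩⟩, ?_⟩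
      · intro h0
        rw [Prod.mk.injEq] at h0
        exact hϖne h0.1
      · rw [hϖ]; split <;> norm_num
      · rw [hϖ]; split <;> norm_num
      · intro p q hpK hqK hpq
        obtain ⟨hp1, hp2, cp, hcp, hsp⟩ := hpK
        obtain ⟨hq1, hq2, cq, hcq, hsq⟩ := hqK
        have hfst : p.1 + q.1 = ϖ i := congrArg Prod.fst hpq
        have hsnd : p.2 + q.2 = ϖ i := congrArg Prod.snd hpq
        have hzero : ∀ j, cp j = 0 ∧ cq j = 0 := by
          have hsz : (∑ j, (cp j + cq j) • b j) = 0 := by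
            rw [Finset.sum_congr rfl fun j _ => add_smul (cp j) (cq j) (b j),
              Finset.sum_add_distrib, ← hsp, ← hsq]
            have hab : p.1 - p.2 + (q.1 - q.2) = (p.1 + q.1) - (p.2 + q.2) := by abel
            rw [hab, hfst, hsnd, sub_self]
          have hli := Fintype.linearIndependent_iff.mp b.linearIndependent _ hsz
          intro j
          constructor <;> nlinarith [hli j, hcp j, hcq j]
        have hpmu : p.2 = p.1 := by
          have h0 : p.1 - p.2 = 0 := by
            rw [hsp]
            exact Finset.sum_eq_zero fun j _ => by rw [(hzero j).1, zero_smul]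
          have := sub_eq_zero.mp h0
          exact this.symm
        have hqmu : q.2 = q.1 := by
          have h0 : q.1 - q.2 = 0 := by
            rw [hsq]
            exact Finset.sum_eq_zero fun j _ => by rw [(hzero j).2, zero_smul]
          have := sub_eq_zero.mp h0
          exact this.symm
        have hk0 : ∀ k, k ≠ i → coroot k p.1 = 0 ∧ coroot k q.1 = 0 := by
          intro k hk
          have h0 : coroot k p.1 + coroot k q.1 = 0 := by
            rw [← map_add, hfst, hϖ, if_neg (fun hik => hk hik.symm)]
          exact ⟨le_antisymm (by linarith [hq1 k]) (hp1 k),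
            le_antisymm (by linarith [hp1 k]) (hq1 k)⟩
        have hsum_i : coroot i p.1 + coroot i q.1 = 1 := by
          rw [← map_add, hfst, hϖ, if_pos rfl]
        have hp1t : p.1 = coroot i p.1 • ϖ i := by
          have h0 : p.1 - coroot i p.1 • ϖ i = 0 := by
            apply klemv
            intro k
            rw [map_sub, map_smul, hϖ, smul_eq_mul]
            by_cases hk : k = i
            · subst hk
              rw [if_pos rfl, mul_one, sub_self]
            · rw [(hk0 k hk).1, if_neg (fun hik => hk hik.symm), mul_zero, sub_zero]
          exact sub_eq_zero.mp h0
        have hq1t : q.1 = coroot i q.1 • ϖ i := by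
          have h0 : q.1 - coroot i q.1 • ϖ i = 0 := by
            apply klemv
            intro k
            rw [map_sub, map_smul, hϖ, smul_eq_mul]
            by_cases hk : k = i
            · subst hk
              rw [if_pos rfl, mul_one, sub_self]
            · rw [(hk0 k hk).2, if_neg (fun hik => hk hik.symm), mul_zero, sub_zero]
          exact sub_eq_zero.mp h0
        constructor
        · exact ⟨coroot i p.1, hp1 i, by
            rw [Prod.smul_mk]
            exact Prod.ext_iff.mpr ⟨hp1t, hpmu.trans hp1t⟩⟩
        · exact ⟨coroot i q.1, hq1 i, by
            rw [Prod.smul_mk]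
            exact Prod.ext_iff.mpr ⟨hq1t, hqmu.trans hq1t⟩⟩
    · -- case given I
      set c : Fin r → ℚ := fun j => x j (ϖ i - mu) with hcdef
      have hcIc : ∀ j, j ∉ I → c j = 0 := fun j hj => hcI j (Finset.mem_compl.mpr hj)
      have hxcoord : ∀ j, (x j : Module.Dual ℚ V) = b.coord j := by
        intro j
        apply b.ext
        intro k
        rw [hx k j, Module.Basis.coord_apply, Module.Basis.repr_self, Finsupp.single_apply]
      have hsum : ϖ i - mu = ∑ j, c j • b j := by
        conv_lhs => rw [← b.sum_repr (ϖ i - mu)]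
        refine Finset.sum_congr rfl fun j _ => ?_
        simp only [hcdef]
        rw [hxcoord j, Module.Basis.coord_apply]
      have hcv : ∀ k, coroot k (ϖ i - mu) = (if i = k then 1 else 0) - coroot k mu := by
        intro k
        rw [map_sub, hϖ]
      have hc : ∀ k, 0 ≤ c k := by
        apply cpos
        intro k hk
        have hkI : k ∈ I := by
          by_contra hkn
          rw [hcIc k hkn] at hk
          exact lt_irrefl 0 hk
        rw [← hsum, hcv k, hμI k hkI, sub_zero]
        split <;> norm_num
      have hdom : ∀ k, 0 ≤ coroot k mu := by
        intro k
        by_cases hkI : k ∈ I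
        · rw [hμI k hkI]
        · have h1 : coroot k (ϖ i - mu) ≤ 0 := by
            rw [hsum, hcexp]
            apply Finset.sum_nonpos
            intro j _
            by_cases hjk : j = k
            · rw [hjk, hcIc k hkI, zero_mul]
            · exact mul_nonpos_of_nonneg_of_nonpos (hc j) (hoff j k hjk)
          have h2 := hcv k
          have hik : ¬ (i = k) := fun h => hkI (h ▸ hiI)
          rw [if_neg hik] at h2
          linarith
      refine ⟨?_, ⟨fun k => by rw [hϖ]; split <;> norm_num, hdom, ⟨c, hc, hsum⟩⟩, ?_⟩
      · intro h0
        rw [Prod.mk.injEq] at h0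
        exact hϖne h0.1
      · intro p q hpK hqK hpq
        obtain ⟨hp1, hp2, cp, hcp, hsp⟩ := hpK
        obtain ⟨hq1, hq2, cq, hcq, hsq⟩ := hqK
        have hfst : p.1 + q.1 = ϖ i := congrArg Prod.fst hpq
        have hsnd : p.2 + q.2 = mu := congrArg Prod.snd hpq
        have hk0 : ∀ k, k ≠ i → coroot k p.1 = 0 ∧ coroot k q.1 = 0 := by
          intro k hk
          have h0 : coroot k p.1 + coroot k q.1 = 0 := by
            rw [← map_add, hfst, hϖ, if_neg (fun hik => hk hik.symm)]
          exact ⟨le_antisymm (by linarith [hq1 k]) (hp1 k),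
            le_antisymm (by linarith [hp1 k]) (hq1 k)⟩
        set t : ℚ := coroot i p.1 with htdef
        have hp1t : p.1 = t • ϖ i := by
          have h0 : p.1 - t • ϖ i = 0 := by
            apply klemv
            intro k
            rw [map_sub, map_smul, hϖ, smul_eq_mul]
            by_cases hk : k = i
            · subst hk
              rw [if_pos rfl, mul_one, htdef, sub_self]
            · rw [(hk0 k hk).1, if_neg (fun hik => hk hik.symm), mul_zero, sub_zero]
          exact sub_eq_zero.mp h0
        have hsum_i : t + coroot i q.1 = 1 := by
          rw [htdef, ← map_add, hfst, hϖ, if_pos rfl]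
        have hq1t : q.1 = (1 - t) • ϖ i := by
          have h0 : q.1 - (1 - t) • ϖ i = 0 := by
            apply klemv
            intro k
            rw [map_sub, map_smul, hϖ, smul_eq_mul]
            by_cases hk : k = i
            · subst hk
              rw [if_pos rfl, mul_one]
              linarith
            · rw [(hk0 k hk).2, if_neg (fun hik => hk hik.symm), mul_zero, sub_zero]
          exact sub_eq_zero.mp h0
        -- coefficients add up
        have hcsum : ∀ j, cp j + cq j = c j := by
          have hsz : (∑ j, (cp j + cq j - c j) • b j) = 0 := by
            have hrw : ∀ j, (cp j + cq j - c j) • b j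
                = (cp j • b j + cq j • b j) - c j • b j := by
              intro j
              module
            rw [Finset.sum_congr rfl fun j _ => hrw j, Finset.sum_sub_distrib,
              Finset.sum_add_distrib, ← hsp, ← hsq, ← hsum]
            have hab : p.1 - p.2 + (q.1 - q.2) - (ϖ i - mu)
                = ((p.1 + q.1) - ϖ i) - ((p.2 + q.2) - mu) := by abel
            rw [hab, hfst, hsnd, sub_self, sub_self, sub_zero]
          have hli := Fintype.linearIndependent_iff.mp b.linearIndependent _ hsz
          intro j
          have := hli j
          linarith
        have hcpI : ∀ j, j ∉ I → cp j = 0 ∧ cq j = 0 := by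
          intro j hj
          have h0 := hcsum j
          rw [hcIc j hj] at h0
          constructor <;> linarith [hcp j, hcq j]
        have hmuI0 : ∀ k, k ∈ I → coroot k p.2 = 0 ∧ coroot k q.2 = 0 := by
          intro k hk
          have h0 : coroot k p.2 + coroot k q.2 = 0 := by
            rw [← map_add, hsnd, hμI k hk]
          exact ⟨le_antisymm (by linarith [hq2 k]) (hp2 k),
            le_antisymm (by linarith [hp2 k]) (hq2 k)⟩
        have hw : p.2 - t • mu = ∑ j, (t * c j - cp j) • b j := by
          have e1 : p.2 - t • mu = (t • (ϖ i - mu) - (p.1 - p.2)) + (p.1 - t • ϖ i) := by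
            module
          rw [hsp, hsum, hp1t, sub_self, add_zero] at e1
          rw [e1, Finset.smul_sum, ← Finset.sum_sub_distrib]
          refine Finset.sum_congr rfl fun j _ => ?_
          rw [smul_smul, ← sub_smul]
        have hd0 := klemd (fun j => t * c j - cp j) ?_
        · have hp2t : p.2 = t • mu := by
            have h0 : p.2 - t • mu = 0 := by
              rw [hw]
              exact Finset.sum_eq_zero fun j _ => by rw [hd0 j, zero_smul]
            exact sub_eq_zero.mp h0
          have hq2t : q.2 = (1 - t) • mu := by
            have h0 : q.2 = mu - p.2 := by rw [← hsnd]; abel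
            rw [h0, hp2t]
            module
          constructor
          · exact ⟨t, hp1 i, by
              rw [Prod.smul_mk]
              exact Prod.ext_iff.mpr ⟨hp1t, hp2t⟩⟩
          · refine ⟨1 - t, by linarith [hq1 i, hsum_i], by
              rw [Prod.smul_mk]
              exact Prod.ext_iff.mpr ⟨hq1t, hq2t⟩⟩
        · intro k hk
          show coroot k (∑ j, (t * c j - cp j) • b j) = 0
          rw [← hw, map_sub, map_smul, smul_eq_mul]
          have hkI : k ∈ I := by
            by_contra hkn
            apply hk
            show t * c k - cp k = 0
            rw [hcIc k hkn, (hcpI k hkn).1, mul_zero, sub_zero]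
          rw [(hmuI0 k hkI).1, hμI k hkI, mul_zero, sub_zero]
end

section
/- Fix an index j. The extreme points (vertices) of IP_{ϖ_j} are exactly the following points: ϖ_j itself, together with the points ϖ_j − Σ_{i ∈ I} c_i α_i, where I ranges over the connected subsets of {1, …, r} containing j and (c_i)_{i ∈ I} is the unique tuple of rationals satisfying Σ_{i ∈ I} c_i ⟨α_i, α_k^∨⟩ = δ_{jk} for all k ∈ I (i.e., the j-th column of the inverse transpose of the Cartan matrix of the subsystem on I). -/
set_option maxHeartbeats 1600000


section Key
variable {V : Type*} [AddCommGroup V] [Module ℚ V] {r : ℕ}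

lemma key_form (b : Module.Basis (Fin r) ℚ V) (coroot : Fin r → Module.Dual ℚ V)
    (hdiag : ∀ i, coroot i (b i) = 2)
    (Φ : Set V) (hΦfin : Φ.Finite) (hΦroot : ∀ i, b i ∈ Φ)
    (hΦrefl : ∀ β ∈ Φ, ∀ i, β - coroot i β • b i ∈ Φ) :
    ∃ Bf : V →ₗ[ℚ] V →ₗ[ℚ] ℚ,
      (∀ x y, Bf x y = Bf y x) ∧ (∀ x, x ≠ 0 → 0 < Bf x x) ∧
      (∀ k x, Bf x (b k) = Bf (b k) (b k) / 2 * coroot k x) := by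
  classical
  have hinv : ∀ k, Function.Involutive ⇑(LinearMap.id - (coroot k).smulRight (b k) : V →ₗ[ℚ] V) := by
    intro k x
    have h1 : coroot k (x - coroot k x • b k) = - coroot k x := by
      rw [map_sub, map_smul, hdiag k]; simp [smul_eq_mul]; ring
    simp only [LinearMap.sub_apply, LinearMap.id_apply, LinearMap.smulRight_apply]
    rw [h1]
    simp [neg_smul]
  let σ : Fin r → V ≃ₗ[ℚ] V := fun k =>
    LinearEquiv.ofInvolutive (LinearMap.id - (coroot k).smulRight (b k)) (hinv k)
  have hσapp : ∀ k x, σ k x = x - coroot k x • b k := by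
    intro k x; rfl
  let G : Subgroup (V ≃ₗ[ℚ] V) := Subgroup.closure (Set.range σ)
  have hmaps : ∀ w ∈ G, Set.MapsTo ⇑w Φ Φ := by
    intro w hw
    refine Subgroup.closure_induction ?_ ?_ ?_ ?_ hw
    · rintro x ⟨k, rfl⟩ β hβ
      have := hΦrefl β hβ k
      rw [show σ k β = β - coroot k β • b k from hσapp k β]
      exact this
    · intro β hβ; simpa using hβ
    · intro x y _ _ hx hy β hβ
      have : (x * y) β = x (y β) := rfl
      show (x * y) β ∈ Φ  -- dummy
      rw [show ((x*y) : V ≃ₗ[ℚ] V) β = x (y β) from rfl] at *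
      exact hx (hy hβ)
    · intro x _ hx
      have himg : ⇑x '' Φ = Φ := by
        refine Set.eq_of_subset_of_ncard_le (Set.MapsTo.image_subset hx) ?_ hΦfin
        rw [Set.ncard_image_of_injective _ x.injective]
      intro β hβ
      rw [← himg] at hβ
      obtain ⟨γ, hγ, hγβ⟩ := hβ
      have : (x⁻¹ : V ≃ₗ[ℚ] V) β = γ := by
        show x.symm β = γ
        rw [LinearEquiv.symm_apply_eq]; exact hγβ.symm
      rw [show (⇑(x⁻¹) β) = γ from this]
      exact hγ
  haveI := hΦfin.to_subtype
  haveI hGfin : Finite G := by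
    apply Finite.of_injective
      (fun w : G => (fun p : Φ => (⟨w.1 p.1, hmaps w.1 w.2 p.2⟩ : Φ)))
    intro w1 w2 h
    apply Subtype.ext
    apply LinearEquiv.toLinearMap_injective
    apply b.ext
    intro i
    have := congrFun h ⟨b i, hΦroot i⟩
    simpa [Subtype.ext_iff] using this
  haveI : Fintype G := Fintype.ofFinite _
  let B0 : V →ₗ[ℚ] V →ₗ[ℚ] ℚ := LinearMap.mk₂ ℚ
    (fun x y => ∑ i, b.repr x i * b.repr y i)
    (by intro x1 x2 y; simp [add_mul, Finset.sum_add_distrib])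
    (by intro c x y; simp [Finset.mul_sum, mul_assoc])
    (by intro x y1 y2; simp [mul_add, Finset.sum_add_distrib])
    (by intro c x y; simp [Finset.mul_sum, smul_eq_mul]; ring_nf;
        exact Finset.sum_congr rfl fun i _ => by ring)
  have hB0symm : ∀ x y, B0 x y = B0 y x := by
    intro x y; simp only [B0, LinearMap.mk₂_apply]
    exact Finset.sum_congr rfl fun i _ => mul_comm _ _
  have hB0nonneg : ∀ x, 0 ≤ B0 x x := by
    intro x; simp only [B0, LinearMap.mk₂_apply]
    exact Finset.sum_nonneg fun i _ => mul_self_nonneg _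
  have hB0pos : ∀ x, x ≠ 0 → 0 < B0 x x := by
    intro x hx
    simp only [B0, LinearMap.mk₂_apply]
    have : ∃ i, b.repr x i ≠ 0 := by
      by_contra h
      push_neg at h
      apply hx
      have : b.repr x = 0 := by ext i; exact h i
      simpa using congrArg b.repr.symm this
    obtain ⟨i, hi⟩ := this
    exact Finset.sum_pos' (fun i _ => mul_self_nonneg _) ⟨i, Finset.mem_univ i, mul_self_pos.2 hi⟩
  let Bf : V →ₗ[ℚ] V →ₗ[ℚ] ℚ := LinearMap.mk₂ ℚ
    (fun x y => ∑ w : G, B0 (w.1 x) (w.1 y))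
    (by intro x1 x2 y; simp [map_add, Finset.sum_add_distrib])
    (by intro c x y; simp [map_smul, Finset.mul_sum, smul_eq_mul])
    (by intro x y1 y2; simp [map_add, Finset.sum_add_distrib])
    (by intro c x y; simp [map_smul, Finset.mul_sum, smul_eq_mul])
  have hBfsymm : ∀ x y, Bf x y = Bf y x := by
    intro x y; simp only [Bf, LinearMap.mk₂_apply]
    exact Finset.sum_congr rfl fun w _ => hB0symm _ _
  have hBfpos : ∀ x, x ≠ 0 → 0 < Bf x x := by
    intro x hx
    simp only [Bf, LinearMap.mk₂_apply]
    refine Finset.sum_pos' (fun w _ => hB0nonneg _) ⟨1, Finset.mem_univ _, ?_⟩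
    have h1 : ((1 : G) : V ≃ₗ[ℚ] V) x = x := rfl
    rw [h1]
    exact hB0pos x hx
  have hBinv : ∀ k x y, Bf (σ k x) (σ k y) = Bf x y := by
    intro k x y
    have hmem : σ k ∈ G := Subgroup.subset_closure ⟨k, rfl⟩
    let g : G := ⟨σ k, hmem⟩
    simp only [Bf, LinearMap.mk₂_apply]
    refine Fintype.sum_equiv (Equiv.mulRight g) _ _ ?_
    intro w
    have : ∀ z : V, ((w * g : G) : V ≃ₗ[ℚ] V) z = w.1 (σ k z) := fun z => rfl
    show B0 (w.1 (σ k x)) (w.1 (σ k y)) = B0 ((w * g).1 x) ((w * g).1 y)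
    rw [this x, this y]
  refine ⟨Bf, hBfsymm, hBfpos, ?_⟩
  intro k x
  have hσbk : σ k (b k) = -(b k) := by
    rw [hσapp, hdiag k, two_smul]; abel
  have hx' : coroot k (x - (coroot k x / 2) • b k) = 0 := by
    rw [map_sub, map_smul, hdiag k]; simp [smul_eq_mul]
  have hfix : σ k (x - (coroot k x / 2) • b k) = x - (coroot k x / 2) • b k := by
    rw [hσapp, hx', zero_smul, sub_zero]
  have h0 : Bf (x - (coroot k x / 2) • b k) (b k) = 0 := by
    have h := hBinv k (x - (coroot k x / 2) • b k) (b k)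
    rw [hfix, hσbk, map_neg] at h
    linarith
  have hexp : Bf (x - (coroot k x / 2) • b k) (b k)
      = Bf x (b k) - (coroot k x / 2) * Bf (b k) (b k) := by
    rw [map_sub, map_smul, LinearMap.sub_apply, LinearMap.smul_apply, smul_eq_mul]
  rw [hexp] at h0
  linarith [h0]

end Key


section Aux
variable {V : Type*} [AddCommGroup V] [Module ℚ V] {r : ℕ}

lemma repr_sum (b : Module.Basis (Fin r) ℚ V) (I : Finset (Fin r)) (e : Fin r → ℚ) (i0 : Fin r) :
    b.repr (∑ i ∈ I, e i • b i) i0 = if i0 ∈ I then e i0 else 0 := by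
  classical
  rw [map_sum]
  rw [show ((∑ i ∈ I, b.repr (e i • b i)) i0 = ∑ i ∈ I, (b.repr (e i • b i)) i0) from by
    rw [Finset.sum_apply']]
  simp only [map_smul, Module.Basis.repr_self, Finsupp.smul_apply, Finsupp.single_apply, smul_eq_mul]
  rw [Finset.sum_congr rfl (fun i _ => by rw [mul_ite, mul_one, mul_zero])]
  exact Finset.sum_ite_eq' I i0 e

lemma unique_aux (b : Module.Basis (Fin r) ℚ V) (coroot : Fin r → Module.Dual ℚ V)
    (Bf : V →ₗ[ℚ] V →ₗ[ℚ] ℚ) (hpos : ∀ x, x ≠ 0 → 0 < Bf x x)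
    (hrel : ∀ k x, Bf x (b k) = Bf (b k) (b k) / 2 * coroot k x)
    (I : Finset (Fin r)) (e : Fin r → ℚ)
    (h : ∀ k ∈ I, coroot k (∑ i ∈ I, e i • b i) = 0) :
    ∀ i ∈ I, e i = 0 := by
  classical
  set v := ∑ i ∈ I, e i • b i with hv
  have hvz : v = 0 := by
    by_contra hne
    have hpos' := hpos v hne
    have hz : Bf v v = 0 := by
      conv_lhs => rw [hv]
      rw [map_sum]
      refine Finset.sum_eq_zero fun k hk => ?_
      rw [map_smul, smul_eq_mul, hrel k v, h k hk, mul_zero, mul_zero]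
    linarith
  intro i hi
  have h2 := congrArg (fun z => b.repr z i) hvz
  simp only [map_zero, Finsupp.coe_zero, Pi.zero_apply] at h2
  rw [hv, repr_sum, if_pos hi] at h2
  exact h2

lemma sign_aux (b : Module.Basis (Fin r) ℚ V) (coroot : Fin r → Module.Dual ℚ V)
    (hoff : ∀ i k : Fin r, i ≠ k → coroot k (b i) ≤ 0)
    (Bf : V →ₗ[ℚ] V →ₗ[ℚ] ℚ) (hpos : ∀ x, x ≠ 0 → 0 < Bf x x)
    (hrel : ∀ k x, Bf x (b k) = Bf (b k) (b k) / 2 * coroot k x)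
    (I : Finset (Fin r)) (c : Fin r → ℚ)
    (h : ∀ k ∈ I, 0 ≤ coroot k (∑ i ∈ I, c i • b i)) :
    ∀ i ∈ I, 0 ≤ c i := by
  classical
  set P := I.filter (fun i => 0 ≤ c i) with hP
  set N := I.filter (fun i => ¬ 0 ≤ c i) with hN
  set v := ∑ i ∈ I, c i • b i with hv
  set vp := ∑ i ∈ P, c i • b i with hvp
  set vm := ∑ i ∈ N, (-(c i)) • b i with hvm
  have hsplit : v = vp - vm := by
    rw [hv, hvp, hvm, ← Finset.sum_filter_add_sum_filter_not I (fun i => 0 ≤ c i)]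
    rw [show (∑ i ∈ N, (-(c i)) • b i) = - ∑ i ∈ N, c i • b i from by
      rw [← Finset.sum_neg_distrib]; exact Finset.sum_congr rfl fun i _ => by rw [neg_smul]]
    rw [← hP, ← hN]
    abel
  have hdk : ∀ k, 0 < Bf (b k) (b k) := fun k => hpos _ (b.ne_zero k)
  have h2 : 0 ≤ Bf v vm := by
    rw [hvm, map_sum]
    refine Finset.sum_nonneg fun k hk => ?_
    rw [map_smul, smul_eq_mul, hrel k v]
    have hkI : k ∈ I := (Finset.mem_filter.1 hk).1
    have hck : ¬ 0 ≤ c k := (Finset.mem_filter.1 hk).2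
    have := h k hkI
    have hd2 : 0 ≤ Bf (b k) (b k) / 2 := by linarith [hdk k]
    have : 0 ≤ Bf (b k) (b k) / 2 * coroot k v := mul_nonneg hd2 this
    exact mul_nonneg (by linarith [not_le.1 hck]) this
  have h3 : Bf vp vm ≤ 0 := by
    rw [hvm, map_sum]
    refine Finset.sum_nonpos fun k hk => ?_
    rw [map_smul, smul_eq_mul, hrel k vp]
    have hck : ¬ 0 ≤ c k := (Finset.mem_filter.1 hk).2
    have hcor : coroot k vp ≤ 0 := by
      rw [hvp, map_sum]
      refine Finset.sum_nonpos fun i hi => ?_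
      rw [map_smul, smul_eq_mul]
      have hci : 0 ≤ c i := (Finset.mem_filter.1 hi).2
      have hik : i ≠ k := by
        intro hik
        exact hck (hik ▸ hci)
      exact mul_nonpos_of_nonneg_of_nonpos hci (hoff i k hik)
    have hd2 : 0 ≤ Bf (b k) (b k) / 2 := by linarith [hdk k]
    have h5 : Bf (b k) (b k) / 2 * coroot k vp ≤ 0 := mul_nonpos_of_nonneg_of_nonpos hd2 hcor
    exact mul_nonpos_of_nonneg_of_nonpos (by linarith [not_le.1 hck]) h5
  have h1 : Bf vm vm ≤ 0 := by
    have : Bf vm vm = Bf vp vm - Bf v vm := by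
      rw [hsplit, map_sub, LinearMap.sub_apply]
      ring
    linarith
  have hvmz : vm = 0 := by
    by_contra hne
    exact absurd h1 (not_le.2 (hpos vm hne))
  intro i hi
  by_contra hneg
  have hiN : i ∈ N := Finset.mem_filter.2 ⟨hi, hneg⟩
  have h6 := congrArg (fun z => b.repr z i) hvmz
  simp only [map_zero, Finsupp.coe_zero, Pi.zero_apply] at h6
  rw [hvm, repr_sum, if_pos hiN] at h6
  have : c i = 0 := by linarith [neg_eq_zero.1 h6]
  exact hneg (le_of_eq this.symm)

end Aux


section Aux2
variable {V : Type*} [AddCommGroup V] [Module ℚ V] {r : ℕ}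

lemma zero_closure_aux (b : Module.Basis (Fin r) ℚ V) (coroot : Fin r → Module.Dual ℚ V)
    (hoff : ∀ i k : Fin r, i ≠ k → coroot k (b i) ≤ 0)
    (I : Finset (Fin r)) (j : Fin r) (c : Fin r → ℚ)
    (hnn : ∀ i ∈ I, 0 ≤ c i)
    (heq : ∀ k ∈ I, coroot k (∑ i ∈ I, c i • b i) = if j = k then 1 else 0) :
    ∀ k ∈ I, c k = 0 → j ≠ k ∧ ∀ i ∈ I, coroot k (b i) ≠ 0 → c i = 0 := by
  classical
  intro k hk hck
  have he := heq k hk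
  rw [map_sum] at he
  simp only [map_smul, smul_eq_mul] at he
  have hterm : ∀ i ∈ I, c i * coroot k (b i) ≤ 0 := by
    intro i hi
    by_cases hik : i = k
    · subst hik; rw [hck, zero_mul]
    · exact mul_nonpos_of_nonneg_of_nonpos (hnn i hi) (hoff i k hik)
  have hsum_le : (∑ i ∈ I, c i * coroot k (b i)) ≤ 0 := Finset.sum_nonpos hterm
  have hjk : j ≠ k := by
    intro hj
    rw [he, if_pos hj] at hsum_le
    linarith
  refine ⟨hjk, ?_⟩
  have hz : ∀ i ∈ I, c i * coroot k (b i) = 0 := by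
    have h0 : (∑ i ∈ I, c i * coroot k (b i)) = 0 := by rw [he, if_neg hjk]
    exact (Finset.sum_eq_zero_iff_of_nonpos hterm).1 h0
  intro i hi hA
  rcases mul_eq_zero.1 (hz i hi) with h | h
  · exact h
  · exact absurd h hA

lemma pos_aux (b : Module.Basis (Fin r) ℚ V) (coroot : Fin r → Module.Dual ℚ V)
    (hoff : ∀ i k : Fin r, i ≠ k → coroot k (b i) ≤ 0)
    (Bf : V →ₗ[ℚ] V →ₗ[ℚ] ℚ) (hsymm : ∀ x y, Bf x y = Bf y x)
    (hpos : ∀ x, x ≠ 0 → 0 < Bf x x)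
    (hrel : ∀ k x, Bf x (b k) = Bf (b k) (b k) / 2 * coroot k x)
    (I : Finset (Fin r)) (j : Fin r) (hj : j ∈ I)
    (hconn : ((SimpleGraph.fromRel fun a c : Fin r => coroot c (b a) ≠ 0).induce
            (↑I : Set (Fin r))).Connected)
    (c : Fin r → ℚ)
    (heq : ∀ k ∈ I, coroot k (∑ i ∈ I, c i • b i) = if j = k then 1 else 0) :
    ∀ i ∈ I, 0 < c i := by
  classical
  have hnn : ∀ i ∈ I, 0 ≤ c i := by
    refine sign_aux b coroot hoff Bf hpos hrel I c fun k hk => ?_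
    rw [heq k hk]
    split <;> norm_num
  have hclo := zero_closure_aux b coroot hoff I j c hnn heq
  have hA0 : ∀ i k : Fin r, coroot k (b i) = 0 → coroot i (b k) = 0 := by
    intro i k h
    have h1 := hrel k (b i)
    have h2 := hrel i (b k)
    have hsym := hsymm (b i) (b k)
    have hd : 0 < Bf (b i) (b i) := hpos _ (b.ne_zero i)
    rw [h, mul_zero] at h1
    have h3 : Bf (b i) (b i) / 2 * coroot i (b k) = 0 := by rw [← h2, ← hsym, h1]
    rcases mul_eq_zero.1 h3 with h4 | h4
    · linarith
    · exact h4
  intro i hi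
  rcases (hnn i hi).lt_or_eq with h | h
  · exact h
  exfalso
  set Gr := (SimpleGraph.fromRel fun a c : Fin r => coroot c (b a) ≠ 0).induce
      (↑I : Set (Fin r)) with hGr
  have hiS : i ∈ (↑I : Set (Fin r)) := by simpa using hi
  have hjS : j ∈ (↑I : Set (Fin r)) := by simpa using hj
  obtain ⟨p⟩ := hconn.preconnected ⟨i, hiS⟩ ⟨j, hjS⟩
  have hstep : ∀ (u v : ↥(↑I : Set (Fin r))), Gr.Adj u v → c u.1 = 0 → c v.1 = 0 := by
    intro u v huv hu
    have hmemu : u.1 ∈ I := by have := u.2; simpa using this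
    have hmemv : v.1 ∈ I := by have := v.2; simpa using this
    rw [hGr] at huv
    simp only [SimpleGraph.comap_adj, Function.Embedding.coe_subtype,
      SimpleGraph.fromRel_adj] at huv
    obtain ⟨hne, hor⟩ := huv
    have hAne : coroot u.1 (b v.1) ≠ 0 := by
      rcases hor with h4 | h4
      · intro h0
        exact h4 (hA0 v.1 u.1 h0)
      · exact h4
    exact (hclo u.1 hmemu hu).2 v.1 hmemv hAne
  have hprop : ∀ (u v : ↥(↑I : Set (Fin r))) (_ : Gr.Walk u v), c u.1 = 0 → c v.1 = 0 := by
    intro u v p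
    induction p with
    | nil => exact id
    | cons hadj q ih => intro hu; exact ih (hstep _ _ hadj hu)
  have hcj : c j = 0 := hprop _ _ p h.symm
  exact (hclo j hj hcj).1 rfl

end Aux2


section Main
variable {V : Type*} [AddCommGroup V] [Module ℚ V] {r : ℕ}

-- helper: both coefficients vanish
lemma both_zero {a bb x y : ℚ} (ha : 0 < a) (hb : 0 < bb)
    (hx : 0 ≤ x) (hy : 0 ≤ y) (h : a * x + bb * y = 0) : x = 0 ∧ y = 0 := by
  have h6 : a * x ≤ 0 := by nlinarith [mul_nonneg hb.le hy]
  have h7 : 0 ≤ a * x := mul_nonneg ha.le hx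
  have hx0 : x = 0 := by
    have h8 := le_antisymm h6 h7
    rcases mul_eq_zero.1 h8 with h9 | h9
    · exact absurd h9 ha.ne'
    · exact h9
  refine ⟨hx0, ?_⟩
  rw [hx0, mul_zero, zero_add] at h
  rcases mul_eq_zero.1 h with h9 | h9
  · exact absurd h9 hb.ne'
  · exact h9

-- both dominance values vanish
lemma both_zero' {a bb x y : ℚ} (ha : 0 < a) (hb : 0 < bb)
    (hx : 0 ≤ x) (hy : 0 ≤ y) (h : 0 = a * x + bb * y) : x = 0 ∧ y = 0 :=
  both_zero ha hb hx hy h.symm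

end Main




/-- The intersection polytope `IP_lam`: the set of dominant weights `μ` such that
`lam - μ` is a nonnegative rational combination of the simple roots. -/
def IP {V : Type*} [AddCommGroup V] [Module ℚ V] {r : ℕ}
    (b : Fin r → V) (coroot : Fin r → Module.Dual ℚ V) (lam : V) : Set V :=
  {μ | (∀ i, 0 ≤ coroot i μ) ∧
    ∃ c : Fin r → ℚ, (∀ i, 0 ≤ c i) ∧ lam - μ = ∑ i, c i • b i}

/-- Fix an index `j`.  The extreme points (vertices) of `IP_{ϖ_j}` are
exactly: `ϖ_j` itself, together with the points `ϖ_j − Σ_{i ∈ I} c_i α_i`, where `I`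
ranges over the connected subsets of `{1, …, r}` containing `j` and `(c_i)_{i ∈ I}` is the
unique tuple of rationals satisfying `Σ_{i ∈ I} c_i ⟨α_i, α_k^∨⟩ = δ_{jk}` for all
`k ∈ I` (the `j`-th column of the inverse transpose of the Cartan matrix on `I`). -/
theorem stmt_16 {V : Type*} [AddCommGroup V] [Module ℚ V] {r : ℕ}
    (b : Module.Basis (Fin r) ℚ V) (coroot : Fin r → Module.Dual ℚ V)
    (hdiag : ∀ i, coroot i (b i) = 2)
    (hoff : ∀ i j : Fin r, i ≠ j → coroot j (b i) ≤ 0)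
    (hint : ∀ i j : Fin r, ∃ n : ℤ, coroot j (b i) = (n : ℚ))
    (Φ : Set V) (hΦfin : Φ.Finite) (hΦroot : ∀ i, b i ∈ Φ)
    (hΦrefl : ∀ β ∈ Φ, ∀ i, β - coroot i β • b i ∈ Φ)
    (ϖ : Fin r → V)
    (hϖ : ∀ i j : Fin r, coroot j (ϖ i) = if i = j then 1 else 0)
    (j : Fin r) :
    ∀ mu : V, mu ∈ (IP (⇑b) coroot (ϖ j)).extremePoints ℚ ↔
      (mu = ϖ j ∨
        ∃ I : Finset (Fin r), j ∈ I ∧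
          ((SimpleGraph.fromRel fun a c : Fin r => coroot c (b a) ≠ 0).induce
            (↑I : Set (Fin r))).Connected ∧
          ∃ c : Fin r → ℚ,
            (∀ k ∈ I, ∑ i ∈ I, c i * coroot k (b i) = if j = k then 1 else 0) ∧
            mu = ϖ j - ∑ i ∈ I, c i • b i) := by
  classical
  obtain ⟨Bf, hsymm, hpos, hrel⟩ := key_form b coroot hdiag Φ hΦfin hΦroot hΦrefl
  intro mu
  have hϖk : ∀ k, coroot k (ϖ j) = if j = k then 1 else 0 := fun k => hϖ j k
  have hIPmem : ∀ μ : V, μ ∈ IP (⇑b) coroot (ϖ j) ↔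
      (∀ i, 0 ≤ coroot i μ) ∧
        ∃ c : Fin r → ℚ, (∀ i, 0 ≤ c i) ∧ ϖ j - μ = ∑ i, c i • b i := fun μ => Iff.rfl
  constructor
  · intro hext
    rw [mem_extremePoints] at hext
    obtain ⟨hmemIP, hextr⟩ := hext
    obtain ⟨hdom, cex, hcexnn, hcexeq⟩ := (hIPmem mu).1 hmemIP
    set cc : Fin r → ℚ := fun i => b.repr (ϖ j - mu) i with hcc
    have hccex : ∀ i, cc i = cex i := by
      intro i
      rw [hcc]
      simp only []
      rw [hcexeq, repr_sum, if_pos (Finset.mem_univ i)]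
    have hccnn : ∀ i, 0 ≤ cc i := fun i => (hccex i) ▸ hcexnn i
    have hccsum : ϖ j - mu = ∑ i, cc i • b i := by
      rw [hcexeq]
      exact Finset.sum_congr rfl fun i _ => by rw [hccex i]
    by_cases hzero : ∀ i, cc i = 0
    · left
      have h1 : ϖ j - mu = 0 := by
        rw [hccsum]; exact Finset.sum_eq_zero fun i _ => by rw [hzero i, zero_smul]
      exact (sub_eq_zero.1 h1).symm
    · right
      push_neg at hzero
      set I : Finset (Fin r) := Finset.univ.filter (fun i => cc i ≠ 0) with hI
      have hmemI : ∀ i, i ∈ I ↔ cc i ≠ 0 := by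
        intro i; rw [hI]; simp
      have hIsum : ϖ j - mu = ∑ i ∈ I, cc i • b i := by
        rw [hccsum]
        symm
        refine Finset.sum_subset (Finset.subset_univ I) fun i _ hiI => ?_
        have h1 : cc i = 0 := by by_contra h; exact hiI ((hmemI i).2 h)
        rw [h1, zero_smul]
      have hccpos : ∀ i ∈ I, 0 < cc i := fun i hi =>
        (hccnn i).lt_of_ne (Ne.symm ((hmemI i).1 hi))
      have hcor : ∀ k, coroot k mu
          = (if j = k then 1 else 0) - ∑ i ∈ I, cc i * coroot k (b i) := by
        intro k
        have h1 : coroot k (ϖ j - mu) = ∑ i ∈ I, cc i * coroot k (b i) := by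
          rw [hIsum, map_sum]
          exact Finset.sum_congr rfl fun i _ => by rw [map_smul, smul_eq_mul]
        rw [map_sub, hϖk k] at h1
        linarith
      have hKoff : ∀ k, k ∉ I → coroot k mu = 0 →
          j ≠ k ∧ ∀ i ∈ I, coroot k (b i) = 0 := by
        intro k hkI hk0
        have hterm : ∀ i ∈ I, cc i * coroot k (b i) ≤ 0 := fun i hi =>
          mul_nonpos_of_nonneg_of_nonpos (hccnn i) (hoff i k (fun h => hkI (h ▸ hi)))
        have hsle : (∑ i ∈ I, cc i * coroot k (b i)) ≤ 0 := Finset.sum_nonpos hterm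
        have heqn := hcor k
        rw [hk0] at heqn
        have hjk : j ≠ k := by
          intro h; rw [if_pos h] at heqn; linarith
        rw [if_neg hjk] at heqn
        have hs0 : (∑ i ∈ I, cc i * coroot k (b i)) = 0 := by linarith
        refine ⟨hjk, fun i hi => ?_⟩
        have h2 := (Finset.sum_eq_zero_iff_of_nonpos hterm).1 hs0 i hi
        rcases mul_eq_zero.1 h2 with h | h
        · exact absurd h ((hmemI i).1 hi)
        · exact h
      have hIK : ∀ k ∈ I, coroot k mu = 0 := by
        by_contra hcon
        push_neg at hcon
        obtain ⟨k0, hk0I, hk0⟩ := hcon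
        set M : ↥I → ↥I → ℚ := fun i k => coroot k.1 (b i.1) with hM'
        set T : (↥I → ℚ) →ₗ[ℚ] (↥I → ℚ) := {
          toFun := fun dv k => ∑ i, dv i * M i k
          map_add' := by intro f g; funext k; simp [add_mul, Finset.sum_add_distrib]
          map_smul' := by
            intro a f; funext k; simp [Finset.mul_sum, smul_eq_mul, mul_assoc] } with hT'
        have hker : ∀ f, T f = 0 → f = 0 := by
          intro f hf
          set e : Fin r → ℚ := fun i => if h : i ∈ I then f ⟨i, h⟩ else 0 with he'
          have he : ∀ k ∈ I, coroot k (∑ i ∈ I, e i • b i) = 0 := by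
            intro k hk
            rw [map_sum]
            simp only [map_smul, smul_eq_mul]
            have h1 : ∑ i ∈ I, e i * coroot k (b i) = ∑ i : ↥I, f i * M i ⟨k, hk⟩ := by
              rw [Finset.univ_eq_attach, ← Finset.sum_attach I (fun i => e i * coroot k (b i))]
              refine Finset.sum_congr rfl fun i _ => ?_
              rw [he']
              simp only [dif_pos i.2]
              rfl
            rw [h1]
            have h2 := congrFun hf ⟨k, hk⟩
            exact h2
          have hz := unique_aux b coroot Bf hpos hrel I e he
          funext i
          have h2 := hz i.1 i.2
          rw [he'] at h2
          exact (by simpa only [dif_pos i.2] using h2 : f ⟨i.1, i.2⟩ = 0)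
        have hTinj : Function.Injective T := by
          intro f g h
          have h1 : T (f - g) = 0 := by rw [map_sub, h, sub_self]
          exact sub_eq_zero.1 (hker _ h1)
        obtain ⟨dv, hdv⟩ := (LinearMap.injective_iff_surjective).1 hTinj
          (fun k => if k.1 = k0 then 1 else 0)
        set d : Fin r → ℚ := fun i => if h : i ∈ I then dv ⟨i, h⟩ else 0 with hd'
        have hdI : ∀ k, ∀ hk : k ∈ I,
            ∑ i ∈ I, d i * coroot k (b i) = if k = k0 then 1 else 0 := by
          intro k hk
          have h2 := congrFun hdv ⟨k, hk⟩
          have h1 : ∑ i ∈ I, d i * coroot k (b i) = T dv ⟨k, hk⟩ := by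
            show _ = ∑ i : ↥I, dv i * M i ⟨k, hk⟩
            rw [Finset.univ_eq_attach, ← Finset.sum_attach I (fun i => d i * coroot k (b i))]
            refine Finset.sum_congr rfl fun i _ => ?_
            rw [hd']
            simp only [dif_pos i.2]
            rfl
          rw [h1, h2]
        set ν : V := ∑ i ∈ I, d i • b i with hν'
        have hcorν : ∀ k, coroot k ν = ∑ i ∈ I, d i * coroot k (b i) := by
          intro k
          rw [hν', map_sum]
          exact Finset.sum_congr rfl fun i _ => by rw [map_smul, smul_eq_mul]
        have hν0 : ∀ k, coroot k mu = 0 → coroot k ν = 0 := by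
          intro k hk
          by_cases hkI : k ∈ I
          · rw [hcorν, hdI k hkI, if_neg]
            intro h; rw [h] at hk; exact hk0 hk
          · rw [hcorν]
            exact Finset.sum_eq_zero fun i hi => by rw [(hKoff k hkI hk).2 i hi, mul_zero]
        have hνk0 : coroot k0 ν = 1 := by rw [hcorν, hdI k0 hk0I, if_pos rfl]
        have hνne : ν ≠ 0 := by
          intro h; rw [h, map_zero] at hνk0; norm_num at hνk0
        haveI : Nonempty (Fin r) := ⟨j⟩
        set g : Fin r → ℚ := fun k => min (if hk : k ∈ I then cc k / (|d k| + 1) else 1)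
            (if coroot k mu = 0 then 1 else coroot k mu / (|coroot k ν| + 1)) with hg'
        have hgpos : ∀ k, 0 < g k := by
          intro k
          rw [hg']
          apply lt_min
          · split
            · exact div_pos (hccpos k ‹_›) (by positivity)
            · norm_num
          · split
            · norm_num
            · exact div_pos ((hdom k).lt_of_ne (Ne.symm ‹_›)) (by positivity)
        set ε : ℚ := Finset.univ.inf' Finset.univ_nonempty g with hε'
        have hεpos : 0 < ε := by
          rw [hε', Finset.lt_inf'_iff]
          exact fun k _ => hgpos k
        have hεle : ∀ k, ε ≤ g k := fun k => Finset.inf'_le g (Finset.mem_univ k)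
        have hb1 : ∀ i ∈ I, ε * |d i| ≤ cc i := by
          intro i hi
          have h1 : ε ≤ cc i / (|d i| + 1) := by
            have h2 := hεle i
            rw [hg'] at h2
            have h3 := le_trans h2 (min_le_left _ _)
            rwa [dif_pos hi] at h3
          have h4 : ε * (|d i| + 1) ≤ cc i := (le_div_iff₀ (by positivity)).1 h1
          nlinarith [abs_nonneg (d i), hεpos]
        have hb2 : ∀ k, coroot k mu ≠ 0 → ε * |coroot k ν| ≤ coroot k mu := by
          intro k hk
          have h1 : ε ≤ coroot k mu / (|coroot k ν| + 1) := by
            have h2 := hεle k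
            rw [hg'] at h2
            have h3 := le_trans h2 (min_le_right _ _)
            rwa [if_neg hk] at h3
          have h4 : ε * (|coroot k ν| + 1) ≤ coroot k mu := (le_div_iff₀ (by positivity)).1 h1
          nlinarith [abs_nonneg (coroot k ν), hεpos]
        have hνuniv : ν = ∑ i, d i • b i := by
          rw [hν']
          refine Finset.sum_subset (Finset.subset_univ I) fun i _ hiI => ?_
          simp only [hd']
          rw [dif_neg hiI, zero_smul]
        have hmempm : ∀ s : ℚ, |s| ≤ ε → mu - s • ν ∈ IP (⇑b) coroot (ϖ j) := by
          intro s hs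
          refine (hIPmem _).2 ⟨fun k => ?_, fun i => cc i + s * d i, fun i => ?_, ?_⟩
          · rw [map_sub, map_smul, smul_eq_mul]
            by_cases hk : coroot k mu = 0
            · rw [hk, hν0 k hk, mul_zero, sub_zero]
            · have h1 := hb2 k hk
              have h2 : s * coroot k ν ≤ |s * coroot k ν| := le_abs_self _
              rw [abs_mul] at h2
              have h3 : |s| * |coroot k ν| ≤ ε * |coroot k ν| :=
                mul_le_mul_of_nonneg_right hs (abs_nonneg _)
              linarith
          · show 0 ≤ cc i + s * d i
            by_cases hi : i ∈ I
            · have h1 := hb1 i hi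
              have h2 : -(s * d i) ≤ |s * d i| := neg_le_abs _
              rw [abs_mul] at h2
              have h3 : |s| * |d i| ≤ ε * |d i| :=
                mul_le_mul_of_nonneg_right hs (abs_nonneg _)
              linarith
            · have h1 : cc i = 0 := by by_contra h; exact hi ((hmemI i).2 h)
              rw [h1]
              simp only [hd']
              rw [dif_neg hi, mul_zero, add_zero]
          · show ϖ j - (mu - s • ν) = ∑ i, (cc i + s * d i) • b i
            have h1 : ϖ j - (mu - s • ν) = (ϖ j - mu) + s • ν := by abel
            rw [h1, hccsum, hνuniv, Finset.smul_sum, ← Finset.sum_add_distrib]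
            exact Finset.sum_congr rfl fun i _ => by rw [smul_smul, ← add_smul]
        have hseg : mu ∈ openSegment ℚ (mu - ε • ν) (mu - (-ε) • ν) := by
          refine ⟨1/2, 1/2, by norm_num, by norm_num, by norm_num, ?_⟩
          module
        have hcontra := hextr (mu - ε • ν) (hmempm ε (by rw [abs_of_pos hεpos]))
          (mu - (-ε) • ν) (hmempm (-ε) (by rw [abs_neg, abs_of_pos hεpos])) hseg
        have h9 : ε • ν = 0 := sub_eq_self.1 hcontra.1
        rcases smul_eq_zero.1 h9 with h | h
        · exact hεpos.ne' h
        · exact hνne h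
      have heqI : ∀ k ∈ I, ∑ i ∈ I, cc i * coroot k (b i) = if j = k then 1 else 0 := by
        intro k hk
        have h1 := hcor k
        rw [hIK k hk] at h1
        linarith
      have hjI : j ∈ I := by
        by_contra hjI
        have h1 : ∀ k ∈ I, coroot k (∑ i ∈ I, cc i • b i) = 0 := by
          intro k hk
          rw [map_sum]
          simp only [map_smul, smul_eq_mul]
          rw [heqI k hk, if_neg (fun h => hjI (by rw [h]; exact hk))]
        have hz := unique_aux b coroot Bf hpos hrel I cc h1
        obtain ⟨i0, hi0⟩ := hzero
        by_cases h : i0 ∈ I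
        · exact hi0 (hz i0 h)
        · exact hi0 (by by_contra h2; exact h ((hmemI i0).2 h2))
      set Gr := (SimpleGraph.fromRel fun a c : Fin r => coroot c (b a) ≠ 0).induce
          (↑I : Set (Fin r)) with hGr'
      have hjS : j ∈ (↑I : Set (Fin r)) := by simpa using hjI
      set Reach : Fin r → Prop := fun i =>
        ∃ h : i ∈ (↑I : Set (Fin r)), Gr.Reachable ⟨j, hjS⟩ ⟨i, h⟩ with hR'
      have hIR : ∀ k ∈ I, Reach k := by
        by_contra hcon
        push_neg at hcon
        obtain ⟨k1, hk1I, hk1R⟩ := hcon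
        set D := I.filter (fun i => ¬ Reach i) with hD'
        set I' := I.filter Reach with hI''
        have hoffD : ∀ k ∈ D, ∀ i ∈ I', coroot k (b i) = 0 := by
          intro k hkD i hiI'
          by_contra hA
          obtain ⟨hkI, hkR⟩ := Finset.mem_filter.1 hkD
          obtain ⟨hiI, hiR⟩ := Finset.mem_filter.1 hiI'
          obtain ⟨hiS, hreach⟩ := hiR
          have hkS : k ∈ (↑I : Set (Fin r)) := by simpa using hkI
          have hik : i ≠ k := fun h => hkR (h ▸ (⟨hiS, hreach⟩ : Reach i))
          have hadj : Gr.Adj ⟨i, hiS⟩ ⟨k, hkS⟩ := by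
            rw [hGr']
            simp only [SimpleGraph.comap_adj, Function.Embedding.coe_subtype,
              SimpleGraph.fromRel_adj]
            exact ⟨hik, Or.inl hA⟩
          exact hkR ⟨hkS, hreach.trans hadj.reachable⟩
        have hDeq : ∀ k ∈ D, coroot k (∑ i ∈ D, cc i • b i) = 0 := by
          intro k hkD
          obtain ⟨hkI, hkR⟩ := Finset.mem_filter.1 hkD
          have hjk : j ≠ k := by
            intro h
            exact hkR (h ▸ (⟨hjS, SimpleGraph.Reachable.refl _⟩ : Reach j))
          have h1 : ∑ i ∈ I, cc i * coroot k (b i) = 0 := by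
            rw [heqI k hkI, if_neg hjk]
          have hsplit : ∑ i ∈ I', cc i * coroot k (b i)
              + ∑ i ∈ D, cc i * coroot k (b i)
              = ∑ i ∈ I, cc i * coroot k (b i) := by
            rw [hI'', hD']
            exact Finset.sum_filter_add_sum_filter_not I Reach _
          have h2 : ∑ i ∈ I', cc i * coroot k (b i) = 0 :=
            Finset.sum_eq_zero fun i hi => by rw [hoffD k hkD i hi, mul_zero]
          have h3 : ∑ i ∈ D, cc i * coroot k (b i) = 0 := by linarith
          rw [map_sum]
          simp only [map_smul, smul_eq_mul]
          exact h3
        have hz := unique_aux b coroot Bf hpos hrel D cc hDeq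
        have hk1D : k1 ∈ D := Finset.mem_filter.2 ⟨hk1I, hk1R⟩
        exact ((hmemI k1).1 hk1I) (hz k1 hk1D)
      have hconn : Gr.Connected := by
        rw [SimpleGraph.connected_iff]
        constructor
        · intro u v
          obtain ⟨hu1, hu2⟩ := hIR u.1 (by simpa using u.2)
          obtain ⟨hv1, hv2⟩ := hIR v.1 (by simpa using v.2)
          have hu3 : (⟨u.1, hu1⟩ : ↥(↑I : Set (Fin r))) = u := Subtype.ext rfl
          have hv3 : (⟨v.1, hv1⟩ : ↥(↑I : Set (Fin r))) = v := Subtype.ext rfl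
          rw [hu3] at hu2
          rw [hv3] at hv2
          exact hu2.symm.trans hv2
        · exact ⟨⟨j, hjS⟩⟩
      refine ⟨I, hjI, hconn, cc, heqI, ?_⟩
      rw [← hIsum]
      abel
  · rintro (rfl | ⟨I, hjI, hconn, c, hceq, rfl⟩)
    · -- mu = ϖ j is an extreme point
      rw [mem_extremePoints]
      refine ⟨⟨fun i => by rw [hϖk i]; split <;> norm_num,
        0, fun i => le_refl 0, by simp⟩, ?_⟩
      rintro x₁ hx₁ x₂ hx₂ ⟨a, bb, ha, hb, hab, hsum⟩
      obtain ⟨hdom₁, c₁, hc₁nn, hc₁⟩ := (hIPmem x₁).1 hx₁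
      obtain ⟨hdom₂, c₂, hc₂nn, hc₂⟩ := (hIPmem x₂).1 hx₂
      have hkey : a • (ϖ j - x₁) + bb • (ϖ j - x₂) = 0 := by
        have h1 : a • (ϖ j - x₁) + bb • (ϖ j - x₂)
            = (a + bb) • ϖ j - (a • x₁ + bb • x₂) := by
          rw [smul_sub, smul_sub, add_smul]; abel
        rw [h1, hab, one_smul, hsum, sub_self]
      have hco : ∀ i, a * c₁ i + bb * c₂ i = 0 := by
        intro i
        have h5 := congrArg (fun z => (b.repr z) i) hkey
        simp only [map_add, map_smul, Finsupp.coe_add, Finsupp.coe_smul, Pi.add_apply,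
          Pi.smul_apply, smul_eq_mul, map_zero, Finsupp.coe_zero, Pi.zero_apply] at h5
        rw [hc₁, hc₂, repr_sum, repr_sum, if_pos (Finset.mem_univ i),
          if_pos (Finset.mem_univ i)] at h5
        exact h5
      have hfin : ∀ (x : V) (cx : Fin r → ℚ), (ϖ j - x = ∑ i, cx i • b i) →
          (∀ i, cx i = 0) → x = ϖ j := by
        intro x cx hcx h0
        have h1 : ϖ j - x = 0 := by
          rw [hcx]; exact Finset.sum_eq_zero fun i _ => by rw [h0 i, zero_smul]
        have := sub_eq_zero.1 h1
        exact this.symm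
      exact ⟨hfin x₁ c₁ hc₁ fun i => (both_zero ha hb (hc₁nn i) (hc₂nn i) (hco i)).1,
        hfin x₂ c₂ hc₂ fun i => (both_zero ha hb (hc₁nn i) (hc₂nn i) (hco i)).2⟩
    · -- mu = ϖ j - ∑ i ∈ I, c i • b i is an extreme point
      have hceq' : ∀ k ∈ I, coroot k (∑ i ∈ I, c i • b i) = if j = k then 1 else 0 := by
        intro k hk
        rw [map_sum]
        simp only [map_smul, smul_eq_mul]
        exact hceq k hk
      have hcpos := pos_aux b coroot hoff Bf hsymm hpos hrel I j hjI hconn c hceq'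
      set w : V := ∑ i ∈ I, c i • b i with hw
      set c' : Fin r → ℚ := fun i => if i ∈ I then c i else 0 with hc'
      have hsum' : w = ∑ i, c' i • b i := by
        rw [hw]
        rw [show (∑ i, c' i • b i) = ∑ i ∈ Finset.univ, (if i ∈ I then c i • b i else 0)
          from Finset.sum_congr rfl fun i _ => by
            by_cases h : i ∈ I <;> simp [hc', h]]
        rw [← Finset.sum_filter]
        congr 1
        ext i
        simp
      have hcorw : ∀ k, coroot k (ϖ j - w) = (if j = k then 1 else 0) - coroot k w := by
        intro k; rw [map_sub, hϖk k]
      have hcork : ∀ k ∈ I, coroot k (ϖ j - w) = 0 := by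
        intro k hk; rw [hcorw, hceq' k hk, sub_self]
      have hdomall : ∀ k, 0 ≤ coroot k (ϖ j - w) := by
        intro k
        by_cases hk : k ∈ I
        · rw [hcork k hk]
        · rw [hcorw]
          have hjk : j ≠ k := fun h => hk (h ▸ hjI)
          rw [if_neg hjk, zero_sub, neg_nonneg, hw, map_sum]
          refine Finset.sum_nonpos fun i hi => ?_
          rw [map_smul, smul_eq_mul]
          exact mul_nonpos_of_nonneg_of_nonpos (hcpos i hi).le
            (hoff i k (fun h => hk (h ▸ hi)))
      rw [mem_extremePoints]
      refine ⟨⟨hdomall, c', fun i => by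
          rw [hc']; by_cases h : i ∈ I
          · simp only [if_pos h]; exact (hcpos i h).le
          · simp [h], by rw [sub_sub_cancel, hsum']⟩, ?_⟩
      rintro x₁ hx₁ x₂ hx₂ ⟨a, bb, ha, hb, hab, hsum⟩
      obtain ⟨hdom₁, c₁, hc₁nn, hc₁⟩ := (hIPmem x₁).1 hx₁
      obtain ⟨hdom₂, c₂, hc₂nn, hc₂⟩ := (hIPmem x₂).1 hx₂
      have hkey : a • (ϖ j - x₁) + bb • (ϖ j - x₂) = w := by
        have h1 : a • (ϖ j - x₁) + bb • (ϖ j - x₂)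
            = (a + bb) • ϖ j - (a • x₁ + bb • x₂) := by
          rw [smul_sub, smul_sub, add_smul]; abel
        rw [h1, hab, one_smul, hsum]
        abel
      have hco : ∀ i, a * c₁ i + bb * c₂ i = c' i := by
        intro i
        have h5 := congrArg (fun z => (b.repr z) i) hkey
        simp only [map_add, map_smul, Finsupp.coe_add, Finsupp.coe_smul, Pi.add_apply,
          Pi.smul_apply, smul_eq_mul] at h5
        rw [hc₁, hc₂, repr_sum, repr_sum, if_pos (Finset.mem_univ i),
          if_pos (Finset.mem_univ i), hsum', repr_sum, if_pos (Finset.mem_univ i)] at h5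
        exact h5
      have hoffI : ∀ i, i ∉ I → c₁ i = 0 ∧ c₂ i = 0 := by
        intro i hi
        have h5 := hco i
        rw [hc'] at h5
        simp only [if_neg hi] at h5
        exact both_zero ha hb (hc₁nn i) (hc₂nn i) h5
      -- for k ∈ I, both dominance values vanish
      have hdomI : ∀ k ∈ I, coroot k x₁ = 0 ∧ coroot k x₂ = 0 := by
        intro k hk
        have h5 : coroot k (ϖ j - w) = a * coroot k x₁ + bb * coroot k x₂ := by
          have h6 : (ϖ j - w : V) = a • x₁ + bb • x₂ := hsum.symm
          rw [h6, map_add, map_smul, map_smul, smul_eq_mul, smul_eq_mul]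
        rw [hcork k hk] at h5
        exact both_zero' ha hb (hdom₁ k) (hdom₂ k) h5
      have hfin : ∀ (x : V) (cx : Fin r → ℚ), (ϖ j - x = ∑ i, cx i • b i) →
          (∀ i, 0 ≤ cx i) → (∀ i, i ∉ I → cx i = 0) → (∀ k ∈ I, coroot k x = 0) →
          x = ϖ j - w := by
        intro x cx hcx hnn hz hcor0
        have hIsum : ϖ j - x = ∑ i ∈ I, cx i • b i := by
          rw [hcx]
          symm
          refine Finset.sum_subset (Finset.subset_univ I) fun i _ hiI => ?_
          rw [hz i hiI, zero_smul]
        have heqn : ∀ k ∈ I, coroot k (∑ i ∈ I, (cx i - c i) • b i) = 0 := by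
          intro k hk
          have h7 : coroot k (ϖ j - x) = if j = k then 1 else 0 := by
            rw [map_sub, hϖk k, hcor0 k hk, sub_zero]
          rw [hIsum] at h7
          have h8 := hceq' k hk
          have h9 : coroot k (∑ i ∈ I, (cx i - c i) • b i)
              = coroot k (∑ i ∈ I, cx i • b i) - coroot k (∑ i ∈ I, c i • b i) := by
            rw [← map_sub, ← Finset.sum_sub_distrib]
            congr 1
            exact Finset.sum_congr rfl fun i _ => by rw [sub_smul]
          rw [h9, h7, h8, sub_self]
        have hz2 := unique_aux b coroot Bf hpos hrel I (fun i => cx i - c i) heqn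
        have h10 : ϖ j - x = w := by
          rw [hIsum, hw]
          exact Finset.sum_congr rfl fun i hi => by
            rw [sub_eq_zero.1 (hz2 i hi)]
        rw [← h10]
        abel
      exact ⟨hfin x₁ c₁ hc₁ hc₁nn (fun i hi => (hoffI i hi).1) (fun k hk => (hdomI k hk).1),
        hfin x₂ c₂ hc₂ hc₂nn (fun i hi => (hoffI i hi).2) (fun k hk => (hdomI k hk).2)⟩
end
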